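/- arXiv:2302.14324 — 4 statements merged into one kernel-verified Lean document; each statement's English description precedes it below -/
import Mathlib

section
/- For every n ≥ 0 and every sequence of phase factors Φ = (φ_0, …, φ_n) ∈ ℝ^{n+1}, there exist polynomials p, q ∈ ℂ[X] with deg p ≤ n and deg q ≤ n − 1, where p has the same parity as n and q has the same parity as n − 1 (a polynomial r is even if r(−x) = r(x) for all x and odd if r(−x) = −r(x) for all x), such that for every x ∈ [−1, 1], the 2×2 matrix QSP(Φ, x) equals the matrix with rows (p(x), q*(−x)·√(1−x²)) and (q(x)·√(1−x²), p*(−x)), where p* and q* denote the polynomials obtained from p and q by conjugating every coefficient. -/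
open Matrix Complex Polynomial

/-- The reflection matrix `R(x)` appearing in quantum signal processing. -/
noncomputable def Rmat (x : ℝ) : Matrix (Fin 2) (Fin 2) ℂ :=
  !![(x : ℂ), (Real.sqrt (1 - x ^ 2) : ℂ); (Real.sqrt (1 - x ^ 2) : ℂ), -(x : ℂ)]

/-- The phase matrix `diag(e^{iφ}, e^{-iφ})`. -/
noncomputable def phaseMat (φ : ℝ) : Matrix (Fin 2) (Fin 2) ℂ :=
  !![Complex.exp (φ * Complex.I), 0; 0, Complex.exp (-(φ * Complex.I))]

/-- The quantum signal processing matrix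
`QSP(Φ, x) = e^{iφ₀σ_z} ∏_{j=1}^n R(x) e^{iφ_jσ_z}`, product from `j = 1` on the
left to `j = n` on the right. -/
noncomputable def QSP (n : ℕ) (Φ : ℕ → ℝ) (x : ℝ) : Matrix (Fin 2) (Fin 2) ℂ :=
  phaseMat (Φ 0) * ((List.range n).map (fun j => Rmat x * phaseMat (Φ (j + 1)))).prod

private lemma evalMapConj (r : Polynomial ℂ) (z : ℂ) :
    (r.map (starRingEnd ℂ)).eval z = starRingEnd ℂ (r.eval (starRingEnd ℂ z)) := by
  conv_lhs => rw [show z = starRingEnd ℂ (starRingEnd ℂ z) from (Complex.conj_conj z).symm]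
  rw [Polynomial.eval_map, Polynomial.eval₂_at_apply]

private lemma degree_comp_negX_le (r : Polynomial ℂ) :
    (r.comp (-X)).degree ≤ r.degree := by
  rcases eq_or_ne r 0 with h | h
  · simp [h]
  · calc (r.comp (-X)).degree ≤ ((r.comp (-X)).natDegree : WithBot ℕ) := degree_le_natDegree
      _ = (r.natDegree : WithBot ℕ) := by rw [natDegree_comp]; simp
      _ = r.degree := (degree_eq_natDegree h).symm

private lemma QSP_succ (n : ℕ) (Φ : ℕ → ℝ) (x : ℝ) :
    QSP (n + 1) Φ x = QSP n Φ x * (Rmat x * phaseMat (Φ (n + 1))) := by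
  unfold QSP
  rw [List.range_succ, List.map_append, List.prod_append]
  simp [mul_assoc]

/-- **QSP as a recurrence** (Lemma A.1): the QSP circuit has entries described
by polynomials `p, q` of bounded degree and appropriate parity. -/
theorem qsp_recurrence (n : ℕ) (Φ : ℕ → ℝ) :
    ∃ p q : Polynomial ℂ,
      p.degree ≤ n ∧ q.degree < n ∧
      (Even n → ∀ x : ℂ, p.eval (-x) = p.eval x) ∧
      (Odd n → ∀ x : ℂ, p.eval (-x) = -p.eval x) ∧
      (Even n → ∀ x : ℂ, q.eval (-x) = -q.eval x) ∧
      (Odd n → ∀ x : ℂ, q.eval (-x) = q.eval x) ∧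
      ∀ x : ℝ, x ∈ Set.Icc (-1 : ℝ) 1 →
        QSP n Φ x =
          !![p.eval (x : ℂ),
              (q.map (starRingEnd ℂ)).eval (-(x : ℂ)) * (Real.sqrt (1 - x ^ 2) : ℂ);
             q.eval (x : ℂ) * (Real.sqrt (1 - x ^ 2) : ℂ),
              (p.map (starRingEnd ℂ)).eval (-(x : ℂ))] := by
  induction n with
  | zero =>
    refine ⟨C (Complex.exp (Φ 0 * Complex.I)), 0, ?_, ?_, ?_, ?_, ?_, ?_, ?_⟩
    · simpa using degree_C_le
    · simp
    · intro _ x; simp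
    · intro h; exact absurd h (by simp)
    · intro _ x; simp
    · intro h; exact absurd h (by simp)
    · intro x _
      have h1 : Complex.exp (-(↑(Φ 0) * Complex.I)) =
          (starRingEnd ℂ) (Complex.exp (↑(Φ 0) * Complex.I)) := by
        rw [← Complex.exp_conj]; simp
      simp [QSP, phaseMat, evalMapConj, h1]
  | succ n ih =>
    obtain ⟨p, q, hpd, hqd, hpe, hpo, hqe, hqo, hmat⟩ := ih
    set e := Complex.exp (Φ (n + 1) * Complex.I) with he
    set p' : Polynomial ℂ :=
      C e * (X * p + (1 - X ^ 2) * ((q.map (starRingEnd ℂ)).comp (-X))) with hp'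
    set q' : Polynomial ℂ :=
      C e * (X * q + (p.map (starRingEnd ℂ)).comp (-X)) with hq'
    have hp'eval : ∀ z : ℂ, p'.eval z =
        e * (z * p.eval z + (1 - z ^ 2) * (q.map (starRingEnd ℂ)).eval (-z)) := by
      intro z; simp [hp', eval_comp]
    have hq'eval : ∀ z : ℂ, q'.eval z =
        e * (z * q.eval z + (p.map (starRingEnd ℂ)).eval (-z)) := by
      intro z; simp [hq', eval_comp]
    -- parity transfer to conjugated polynomials
    have hqce : Odd n → ∀ z : ℂ,
        (q.map (starRingEnd ℂ)).eval (-z) = (q.map (starRingEnd ℂ)).eval z := by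
      intro h z
      rw [evalMapConj, evalMapConj, map_neg, hqo h]
    have hqco : Even n → ∀ z : ℂ,
        (q.map (starRingEnd ℂ)).eval (-z) = -(q.map (starRingEnd ℂ)).eval z := by
      intro h z
      rw [evalMapConj, evalMapConj, map_neg, hqe h, map_neg]
    have hpce : Even n → ∀ z : ℂ,
        (p.map (starRingEnd ℂ)).eval (-z) = (p.map (starRingEnd ℂ)).eval z := by
      intro h z
      rw [evalMapConj, evalMapConj, map_neg, hpe h]
    have hpco : Odd n → ∀ z : ℂ,
        (p.map (starRingEnd ℂ)).eval (-z) = -(p.map (starRingEnd ℂ)).eval z := by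
      intro h z
      rw [evalMapConj, evalMapConj, map_neg, hpo h, map_neg]
    refine ⟨p', q', ?_, ?_, ?_, ?_, ?_, ?_, ?_⟩
    · -- degree p' ≤ n + 1
      have h1 : (X * p).degree ≤ ((n + 1 : ℕ) : WithBot ℕ) := by
        calc (X * p).degree ≤ X.degree + p.degree := degree_mul_le _ _
          _ ≤ 1 + (n : WithBot ℕ) := add_le_add (le_of_eq degree_X) hpd
          _ = ((n + 1 : ℕ) : WithBot ℕ) := by push_cast; rw [add_comm]
      have h2 : ((1 - X ^ 2 : Polynomial ℂ) *
          ((q.map (starRingEnd ℂ)).comp (-X))).degree ≤ ((n + 1 : ℕ) : WithBot ℕ) := by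
        rcases eq_or_ne q 0 with hq0 | hq0
        · simp [hq0]
        have hnd : q.natDegree < n := by
          rw [degree_eq_natDegree hq0] at hqd
          exact_mod_cast hqd
        have hd2 : (1 - X ^ 2 : Polynomial ℂ).degree = 2 := by
          rw [degree_sub_eq_right_of_degree_lt (by simp [degree_X_pow] : (1 : Polynomial ℂ).degree < (X ^ 2 : Polynomial ℂ).degree)]
          simp [degree_X_pow]
        calc ((1 - X ^ 2 : Polynomial ℂ) * ((q.map (starRingEnd ℂ)).comp (-X))).degree
            ≤ (1 - X ^ 2 : Polynomial ℂ).degree + ((q.map (starRingEnd ℂ)).comp (-X)).degree :=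
              degree_mul_le _ _
          _ ≤ 2 + q.degree := add_le_add (le_of_eq hd2) (le_trans (degree_comp_negX_le _) degree_map_le)
          _ = ((2 + q.natDegree : ℕ) : WithBot ℕ) := by
              rw [degree_eq_natDegree hq0]; push_cast; ring
          _ ≤ ((n + 1 : ℕ) : WithBot ℕ) := by
              rw [Nat.cast_le]; omega
      calc p'.degree ≤ (C e).degree +
            (X * p + (1 - X ^ 2) * ((q.map (starRingEnd ℂ)).comp (-X))).degree :=
            degree_mul_le _ _
        _ ≤ 0 + (X * p + (1 - X ^ 2) * ((q.map (starRingEnd ℂ)).comp (-X))).degree :=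
            add_le_add degree_C_le le_rfl
        _ = (X * p + (1 - X ^ 2) * ((q.map (starRingEnd ℂ)).comp (-X))).degree := by
            rw [zero_add]
        _ ≤ max (X * p).degree ((1 - X ^ 2) * ((q.map (starRingEnd ℂ)).comp (-X)) :
              Polynomial ℂ).degree := degree_add_le _ _
        _ ≤ ((n + 1 : ℕ) : WithBot ℕ) := max_le h1 h2
    · -- degree q' < n + 1
      have h3 : q'.degree ≤ (n : WithBot ℕ) := by
        have h1 : (X * q).degree ≤ (n : WithBot ℕ) := by
          rcases eq_or_ne q 0 with hq0 | hq0
          · simp [hq0]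
          have hnd : q.natDegree < n := by
            rw [degree_eq_natDegree hq0] at hqd
            exact_mod_cast hqd
          calc (X * q).degree ≤ X.degree + q.degree := degree_mul_le _ _
            _ = ((1 + q.natDegree : ℕ) : WithBot ℕ) := by
                rw [degree_X, degree_eq_natDegree hq0]; push_cast; ring
            _ ≤ (n : WithBot ℕ) := by rw [Nat.cast_le]; omega
        have h2 : ((p.map (starRingEnd ℂ)).comp (-X)).degree ≤ (n : WithBot ℕ) :=
          le_trans (le_trans (degree_comp_negX_le _) degree_map_le) hpd
        calc q'.degree ≤ (C e).degree +
              (X * q + (p.map (starRingEnd ℂ)).comp (-X)).degree := degree_mul_le _ _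
          _ ≤ 0 + (X * q + (p.map (starRingEnd ℂ)).comp (-X)).degree :=
              add_le_add degree_C_le le_rfl
          _ = (X * q + (p.map (starRingEnd ℂ)).comp (-X)).degree := by rw [zero_add]
          _ ≤ max (X * q).degree ((p.map (starRingEnd ℂ)).comp (-X)).degree :=
              degree_add_le _ _
          _ ≤ (n : WithBot ℕ) := max_le h1 h2
      calc q'.degree ≤ (n : WithBot ℕ) := h3
        _ < ((n + 1 : ℕ) : WithBot ℕ) := by rw [Nat.cast_lt]; omega
    · -- Even (n+1) → p' even
      intro h x
      obtain ⟨r, hr⟩ := h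
      have hn : Odd n := ⟨r - 1, by omega⟩
      rw [hp'eval, hp'eval, hpo hn, hqce hn (-x), hqce hn x]
      ring
    · -- Odd (n+1) → p' odd
      intro h x
      obtain ⟨r, hr⟩ := h
      have hn : Even n := ⟨r, by omega⟩
      rw [hp'eval, hp'eval, hpe hn, hqco hn (-x), hqco hn x]
      ring
    · -- Even (n+1) → q' odd
      intro h x
      obtain ⟨r, hr⟩ := h
      have hn : Odd n := ⟨r - 1, by omega⟩
      rw [hq'eval, hq'eval, hqo hn, neg_neg, hpco hn x]
      ring
    · -- Odd (n+1) → q' even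
      intro h x
      obtain ⟨r, hr⟩ := h
      have hn : Even n := ⟨r, by omega⟩
      rw [hq'eval, hq'eval, hqe hn, neg_neg, hpce hn x]
      ring
    · -- the matrix identity
      intro x hx
      set s : ℂ := (Real.sqrt (1 - x ^ 2) : ℂ) with hsdef
      have hs : s * s = 1 - (x : ℂ) ^ 2 := by
        rw [hsdef, ← Complex.ofReal_mul, Real.mul_self_sqrt (by nlinarith [hx.1, hx.2])]
        push_cast; ring
      have hcbar : Complex.exp (-(↑(Φ (n + 1)) * Complex.I)) = (starRingEnd ℂ) e := by
        rw [he, ← Complex.exp_conj]; simp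
      set A := p.eval (x : ℂ)
      set B := (q.map (starRingEnd ℂ)).eval (-(x : ℂ))
      set Cv := q.eval (x : ℂ)
      set D := (p.map (starRingEnd ℂ)).eval (-(x : ℂ))
      have keyn : ∀ r : Polynomial ℂ,
          (r.map (starRingEnd ℂ)).eval (-(x : ℂ)) = (starRingEnd ℂ) (r.eval (-(x : ℂ))) := by
        intro r; rw [evalMapConj, map_neg, Complex.conj_ofReal]
      have keyx : ∀ r : Polynomial ℂ,
          (r.map (starRingEnd ℂ)).eval ((x : ℂ)) = (starRingEnd ℂ) (r.eval ((x : ℂ))) := by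
        intro r; rw [evalMapConj, Complex.conj_ofReal]
      have hA : p'.eval (x : ℂ) = e * ((x : ℂ) * A + (1 - (x : ℂ) ^ 2) * B) := hp'eval _
      have hC : q'.eval (x : ℂ) = e * ((x : ℂ) * Cv + D) := hq'eval _
      have hB : (q'.map (starRingEnd ℂ)).eval (-(x : ℂ)) =
          (starRingEnd ℂ) e * (-(x : ℂ) * B + A) := by
        rw [keyn q', hq'eval, neg_neg]
        rw [_root_.map_mul, _root_.map_add, _root_.map_mul, map_neg, Complex.conj_ofReal, ← keyn q, keyx p,
          Complex.conj_conj]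
      have hD : (p'.map (starRingEnd ℂ)).eval (-(x : ℂ)) =
          (starRingEnd ℂ) e * (-(x : ℂ) * D + (1 - (x : ℂ) ^ 2) * Cv) := by
        rw [keyn p', hp'eval, neg_neg]
        rw [_root_.map_mul, _root_.map_add, _root_.map_mul, _root_.map_mul, map_sub, _root_.map_one, map_pow, map_neg,
          Complex.conj_ofReal, ← keyn p, keyx q, Complex.conj_conj]
        ring
      have hRP : Rmat x * phaseMat (Φ (n + 1)) =
          !![(x : ℂ) * e, s * (starRingEnd ℂ) e; s * e, -(x : ℂ) * (starRingEnd ℂ) e] := by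
        rw [Rmat, phaseMat, Matrix.mul_fin_two, hcbar]
        norm_num
        exact ⟨⟨Or.inl he.symm, Or.inl hsdef.symm⟩, by rw [hsdef, he]⟩
      rw [QSP_succ, hmat x hx, hRP, Matrix.mul_fin_two]
      rw [hA, hB, hC, hD]
      ext i j
      fin_cases i <;> fin_cases j <;>
        simp only [Fin.zero_eta, Fin.mk_one, Matrix.cons_val', Matrix.cons_val_zero,
          Matrix.cons_val_one, Matrix.head_cons, Matrix.empty_val', Matrix.cons_val_fin_one,
          Matrix.head_fin_const, Matrix.of_apply]
      · linear_combination B * e * hs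
      · ring
      · ring
      · linear_combination Cv * (starRingEnd ℂ) e * hs
end

section
/- Let p_Re, q_Re ∈ ℝ[X] with deg p_Re = n. The following are equivalent. (1) There exist polynomials p, q ∈ ℂ[X] whose coefficient-wise real parts are p_Re and q_Re respectively, and a sequence Φ = (φ_0, …, φ_n) ∈ ℝ^{n+1} such that for every x ∈ [−1, 1], the (0,0) entry of QSP(Φ, x) equals p(x) and the (1,0) entry of QSP(Φ, x) equals q(x)·√(1−x²). (2) (a) deg q_Re ≤ n − 1; (b) either p_Re is even and q_Re is odd, or p_Re is odd and q_Re is even (a polynomial r is even if r(−x) = r(x) for all x and odd if r(−x) = −r(x) for all x); and (c') for every x ∈ [−1, 1], p_Re(x)² + (1 − x²)·q_Re(x)² ≤ 1. -/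
open Matrix Complex Polynomial

set_option maxRecDepth 8000


open Polynomial Complex Matrix


namespace QSPAux

variable {R : Type*} [CommRing R]

lemma neg_one_pow_congr {k m : ℕ} (h : k % 2 = m % 2) : (-1 : R)^k = (-1)^m := by
  rcases Nat.even_or_odd k with hk | hk
  · have hm : Even m := Nat.even_iff.mpr (by rw [← h]; exact Nat.even_iff.mp hk)
    rw [hk.neg_one_pow, hm.neg_one_pow]
  · have hm : Odd m := Nat.odd_iff.mpr (by rw [← h]; exact Nat.odd_iff.mp hk)
    rw [hk.neg_one_pow, hm.neg_one_pow]

lemma neg_one_pow_congr' {k m : ℕ} (h : k % 2 ≠ m % 2) : (-1 : R)^k = -(-1)^m := by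
  rcases Nat.even_or_odd k with hk | hk
  · have hm : Odd m := Nat.odd_iff.mpr (by have := Nat.even_iff.mp hk; omega)
    rw [hk.neg_one_pow, hm.neg_one_pow, neg_neg]
  · have hm : Even m := Nat.even_iff.mpr (by have := Nat.odd_iff.mp hk; omega)
    rw [hk.neg_one_pow, hm.neg_one_pow]

lemma coeff_comp_neg_X (p : R[X]) (k : ℕ) :
    (p.comp (-X)).coeff k = (-1)^k * p.coeff k := by
  induction p using Polynomial.induction_on' with
  | add p q hp hq => simp [add_comp, hp, hq, mul_add]
  | monomial m a =>
    rw [monomial_comp, neg_pow]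
    have h1 : C a * ((-1 : R[X])^m * X^m) = C ((-1:R)^m) * (C a * X^m) := by
      rw [← C_1, ← C_neg, ← C_pow]; ring
    rw [h1, coeff_C_mul, coeff_C_mul, coeff_X_pow, coeff_monomial]
    rcases eq_or_ne m k with rfl | hkm
    · simp [neg_one_pow_congr (rfl : m % 2 = m % 2)]
    · simp [hkm, Ne.symm hkm]

lemma comp_neg_X_of_parity {m : ℕ} {p : R[X]} (h : ∀ k, (k + m) % 2 = 1 → p.coeff k = 0) :
    p.comp (-X) = (-1)^m * p := by
  ext k
  rw [coeff_comp_neg_X]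
  have h2 : ((-1 : R[X])^m * p).coeff k = (-1 : R)^m * p.coeff k := by
    rw [← C_1, ← C_neg, ← C_pow, coeff_C_mul]
  rw [h2]
  rcases Nat.decEq (k % 2) (m % 2) with hne | heq
  · rw [h k (by omega)]; ring
  · rw [neg_one_pow_congr heq]

lemma parity_of_comp_neg_X {K : Type*} [Field K] [CharZero K] {m : ℕ} {p : K[X]}
    (h : p.comp (-X) = (-1)^m * p) : ∀ k, (k + m) % 2 = 1 → p.coeff k = 0 := by
  intro k hk
  have h2 := congrArg (fun q => Polynomial.coeff q k) h
  simp only [coeff_comp_neg_X] at h2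
  have h3 : ((-1 : K[X])^m * p).coeff k = (-1 : K)^m * p.coeff k := by
    rw [← C_1, ← C_neg, ← C_pow, coeff_C_mul]
  rw [h3, neg_one_pow_congr' (by omega : k % 2 ≠ m % 2)] at h2
  have h4 : (2 : K) * ((-1:K)^m * p.coeff k) = 0 := by linear_combination -h2
  rcases mul_eq_zero.mp h4 with h5 | h5
  · exact absurd h5 (by norm_num)
  · rcases mul_eq_zero.mp h5 with h6 | h6
    · exact absurd h6 (pow_ne_zero _ (by norm_num))
    · exact h6

lemma eval_neg_of_parity {m : ℕ} {p : R[X]} (h : ∀ k, (k + m) % 2 = 1 → p.coeff k = 0)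
    (x : R) : p.eval (-x) = (-1)^m * p.eval x := by
  have h1 := comp_neg_X_of_parity h
  have h2 := congrArg (fun q => Polynomial.eval x q) h1
  simp only [eval_comp, eval_neg, eval_X] at h2
  rw [h2, show ((-1 : R[X])^m) = C ((-1:R)^m) by rw [← C_1, ← C_neg, ← C_pow], eval_mul, eval_C]

lemma parity_of_eval_neg {m : ℕ} {p : ℝ[X]} (h : ∀ x : ℝ, p.eval (-x) = (-1)^m * p.eval x) :
    ∀ k, (k + m) % 2 = 1 → p.coeff k = 0 := by
  apply parity_of_comp_neg_X
  apply Polynomial.funext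
  intro r
  rw [eval_comp]
  simp only [eval_neg, eval_X]
  rw [h r, show ((-1 : ℝ[X])^m) = C ((-1:ℝ)^m) by rw [← C_1, ← C_neg, ← C_pow], eval_mul, eval_C]

lemma par_mul {a b : ℕ} {p q : R[X]} (hp : ∀ k, (k + a) % 2 = 1 → p.coeff k = 0)
    (hq : ∀ k, (k + b) % 2 = 1 → q.coeff k = 0) :
    ∀ k, (k + (a + b)) % 2 = 1 → (p * q).coeff k = 0 := by
  intro k hk
  rw [coeff_mul]
  apply Finset.sum_eq_zero
  rintro ⟨i, j⟩ hij
  have hij2 : i + j = k := Finset.HasAntidiagonal.mem_antidiagonal.mp hij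
  rcases (by omega : (i + a) % 2 = 1 ∨ (j + b) % 2 = 1) with h | h
  · simp [hp i h]
  · simp [hq j h]

lemma coeff_mul_zero {a b : ℕ} {p q : R[X]} (hp : ∀ k, a < k → p.coeff k = 0)
    (hq : ∀ k, b < k → q.coeff k = 0) :
    ∀ k, a + b < k → (p * q).coeff k = 0 := by
  intro k hk
  rw [coeff_mul]
  apply Finset.sum_eq_zero
  rintro ⟨i, j⟩ hij
  have hij2 : i + j = k := Finset.HasAntidiagonal.mem_antidiagonal.mp hij
  rcases (by omega : a < i ∨ b < j) with h | h
  · simp [hp i h]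
  · simp [hq j h]

lemma coeff_mul_top {a b : ℕ} {p q : R[X]} (hp : ∀ k, a < k → p.coeff k = 0)
    (hq : ∀ k, b < k → q.coeff k = 0) :
    (p * q).coeff (a + b) = p.coeff a * q.coeff b := by
  rw [coeff_mul, Finset.sum_eq_single (a, b)]
  · rintro ⟨i, j⟩ hij hne
    have hij2 : i + j = a + b := Finset.HasAntidiagonal.mem_antidiagonal.mp hij
    have hor : a < i ∨ b < j := by
      by_contra hc
      push_neg at hc
      exact hne (by simp only [Prod.mk.injEq]; omega)
    rcases hor with h | h
    · simp [hp i h]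
    · simp [hq j h]
  · intro hmem
    exact absurd (Finset.HasAntidiagonal.mem_antidiagonal.mpr (rfl : a + b = a + b)) hmem

lemma conj_eval (p : ℂ[X]) (z : ℂ) :
    (starRingEnd ℂ) (p.eval z) = (p.map (starRingEnd ℂ)).eval ((starRingEnd ℂ) z) := by
  induction p using Polynomial.induction_on' with
  | add p q hp hq => rw [eval_add, map_add, hp, hq, Polynomial.map_add, eval_add]
  | monomial m a => simp

lemma conj_eval_real (p : ℂ[X]) (x : ℝ) :
    (starRingEnd ℂ) (p.eval (x:ℂ)) = (p.map (starRingEnd ℂ)).eval (x:ℂ) := by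
  rw [conj_eval]; norm_num

lemma map_conj_map_conj (p : ℂ[X]) : (p.map (starRingEnd ℂ)).map (starRingEnd ℂ) = p := by
  rw [Polynomial.map_map]
  have h : (starRingEnd ℂ).comp (starRingEnd ℂ) = RingHom.id ℂ := by
    ext z; simp
  rw [h, Polynomial.map_id]


end QSPAux





namespace QSPAux


lemma ctFin2 (a b c d : ℂ) : (!![a,b;c,d])ᴴ =
    !![(starRingEnd ℂ) a, (starRingEnd ℂ) c; (starRingEnd ℂ) b, (starRingEnd ℂ) d] := by
  ext i j
  fin_cases i <;> fin_cases j <;> simp [conjTranspose_apply]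

lemma sqnn {x : ℝ} (hx : x ∈ Set.Icc (-1:ℝ) 1) : 0 ≤ 1 - x^2 := by
  rcases hx with ⟨h1, h2⟩; nlinarith

lemma s_sq {x : ℝ} (hx : x ∈ Set.Icc (-1:ℝ) 1) :
    ((Real.sqrt (1 - x^2) : ℝ) : ℂ)^2 = 1 - (x:ℂ)^2 := by
  rw [← Complex.ofReal_pow, Real.sq_sqrt (sqnn hx)]
  push_cast
  ring

lemma exp_mul_exp_neg (φ : ℝ) : Complex.exp (φ * I) * Complex.exp (-(φ * I)) = 1 := by
  rw [← Complex.exp_add]; simp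

lemma conj_expI (φ : ℝ) : (starRingEnd ℂ) (Complex.exp (φ * I)) = Complex.exp (-(φ * I)) := by
  rw [← Complex.exp_conj]; simp [Complex.conj_ofReal]

lemma conj_expI' (φ : ℝ) : (starRingEnd ℂ) (Complex.exp (-(φ * I))) = Complex.exp (φ * I) := by
  rw [← Complex.exp_conj]; simp [Complex.conj_ofReal]

lemma phase_unitary (φ : ℝ) : phaseMat φ * (phaseMat φ)ᴴ = 1 ∧ (phaseMat φ)ᴴ * phaseMat φ = 1 := by
  constructor <;>
  · rw [phaseMat, ctFin2, Matrix.mul_fin_two]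
    simp [exp_mul_exp_neg, conj_expI, conj_expI', ← Complex.exp_add, Matrix.one_fin_two]

lemma R_unitary {x : ℝ} (hx : x ∈ Set.Icc (-1:ℝ) 1) :
    Rmat x * (Rmat x)ᴴ = 1 ∧ (Rmat x)ᴴ * Rmat x = 1 := by
  have hs := s_sq hx
  constructor <;>
  · rw [Rmat, ctFin2, Matrix.mul_fin_two, Matrix.one_fin_two]
    simp only [Complex.conj_ofReal, map_neg]
    ext i j
    fin_cases i <;> fin_cases j <;> simp <;>
      first
        | linear_combination hs
        | ring

lemma phase_det (φ : ℝ) : (phaseMat φ).det = 1 := by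
  rw [phaseMat, Matrix.det_fin_two_of, ← Complex.exp_add]; simp

lemma R_det {x : ℝ} (hx : x ∈ Set.Icc (-1:ℝ) 1) : (Rmat x).det = -1 := by
  rw [Rmat, Matrix.det_fin_two_of]
  have hs := s_sq hx
  linear_combination -hs

lemma qsp_zero (Φ : ℕ → ℝ) (x : ℝ) : QSP 0 Φ x = phaseMat (Φ 0) := by
  simp [QSP]

lemma qsp_succ (n : ℕ) (Φ : ℕ → ℝ) (x : ℝ) :
    QSP (n+1) Φ x = QSP n Φ x * (Rmat x * phaseMat (Φ (n+1))) := by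
  rw [QSP, QSP, List.range_succ, List.map_append, List.prod_append]
  simp [Matrix.mul_assoc]

lemma qsp_congr (n : ℕ) (Φ Φ' : ℕ → ℝ) (x : ℝ) (h : ∀ j ≤ n, Φ j = Φ' j) :
    QSP n Φ x = QSP n Φ' x := by
  rw [QSP, QSP, h 0 (Nat.zero_le _)]
  congr 1
  apply congrArg
  apply List.map_congr_left
  intro j hj
  rw [h (j+1) (by simpa using List.mem_range.mp hj)]

lemma qsp_unitary (n : ℕ) (Φ : ℕ → ℝ) {x : ℝ} (hx : x ∈ Set.Icc (-1:ℝ) 1) :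
    QSP n Φ x * (QSP n Φ x)ᴴ = 1 ∧ (QSP n Φ x)ᴴ * QSP n Φ x = 1 := by
  induction n with
  | zero => rw [qsp_zero]; exact phase_unitary _
  | succ n ih =>
    rw [qsp_succ]
    obtain ⟨ih1, ih2⟩ := ih
    obtain ⟨hr1, hr2⟩ := R_unitary hx
    obtain ⟨hp1, hp2⟩ := phase_unitary (Φ (n+1))
    constructor
    · rw [Matrix.conjTranspose_mul, Matrix.conjTranspose_mul]
      calc QSP n Φ x * (Rmat x * phaseMat (Φ (n+1))) *
            ((phaseMat (Φ (n+1)))ᴴ * (Rmat x)ᴴ * (QSP n Φ x)ᴴ)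
          = QSP n Φ x * (Rmat x * ((phaseMat (Φ (n+1)) * (phaseMat (Φ (n+1)))ᴴ) * (Rmat x)ᴴ)) * (QSP n Φ x)ᴴ := by
            simp only [Matrix.mul_assoc]
        _ = 1 := by rw [hp1, Matrix.one_mul, hr1, Matrix.mul_one, ih1]
    · rw [Matrix.conjTranspose_mul, Matrix.conjTranspose_mul]
      calc (phaseMat (Φ (n+1)))ᴴ * (Rmat x)ᴴ * (QSP n Φ x)ᴴ *
            (QSP n Φ x * (Rmat x * phaseMat (Φ (n+1))))
          = (phaseMat (Φ (n+1)))ᴴ * ((Rmat x)ᴴ * (((QSP n Φ x)ᴴ * QSP n Φ x) * Rmat x)) * phaseMat (Φ (n+1)) := by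
            simp only [Matrix.mul_assoc]
        _ = 1 := by rw [ih2, Matrix.one_mul, hr2, Matrix.mul_one, hp2]

lemma qsp_det (n : ℕ) (Φ : ℕ → ℝ) {x : ℝ} (hx : x ∈ Set.Icc (-1:ℝ) 1) :
    (QSP n Φ x).det = (-1)^n := by
  induction n with
  | zero => rw [qsp_zero]; simp [phase_det]
  | succ n ih =>
    rw [qsp_succ, Matrix.det_mul, Matrix.det_mul, ih, R_det hx, phase_det]
    ring

-- entries of unitary 2x2 with known determinant
lemma unitary_entries (M : Matrix (Fin 2) (Fin 2) ℂ) (d : ℂ)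
    (h1 : M * Mᴴ = 1) (h2 : Mᴴ * M = 1) (hd : M.det = d) :
    M 1 1 = d * (starRingEnd ℂ) (M 0 0) ∧ M 0 1 = -(d * (starRingEnd ℂ) (M 1 0)) := by
  have hadj : M.adjugate = d • Mᴴ := by
    have hM : M * M.adjugate = M * (d • Mᴴ) := by
      rw [Matrix.mul_adjugate, hd, Matrix.mul_smul, h1]
    calc M.adjugate = (Mᴴ * M) * M.adjugate := by rw [h2, Matrix.one_mul]
      _ = Mᴴ * (M * (d • Mᴴ)) := by rw [Matrix.mul_assoc, hM]
      _ = (Mᴴ * M) * (d • Mᴴ) := by rw [Matrix.mul_assoc]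
      _ = d • Mᴴ := by rw [h2, Matrix.one_mul]
  have e1 := congrFun (congrFun (hadj) 0) 0
  have e2 := congrFun (congrFun (hadj) 0) 1
  rw [Matrix.adjugate_fin_two] at e1 e2
  constructor
  · simpa [Matrix.conjTranspose_apply] using e1
  · have : -(M 0 1) = d * (starRingEnd ℂ) (M 1 0) := by
      simpa [Matrix.conjTranspose_apply] using e2
    linear_combination -this


end QSPAux
namespace QSPAux

lemma coeff_X_mul' {R : Type*} [CommRing R] (p : R[X]) (k : ℕ) :
    ((X : R[X]) * p).coeff k = if 1 ≤ k then p.coeff (k-1) else 0 := by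
  rw [show (X : R[X]) * p = p * X^1 by ring, coeff_mul_X_pow']

lemma coeff_one_sub_X_sq_mul {R : Type*} [CommRing R] (q : R[X]) (k : ℕ) :
    ((1 - X^2) * q).coeff k = q.coeff k - (if 2 ≤ k then q.coeff (k-2) else 0) := by
  rw [sub_mul, one_mul, coeff_sub, mul_comm, coeff_mul_X_pow']

lemma qsp_norm (n : ℕ) (Φ : ℕ → ℝ) {x : ℝ} (hx : x ∈ Set.Icc (-1:ℝ) 1) :
    (starRingEnd ℂ) (QSP n Φ x 0 0) * QSP n Φ x 0 0
      + (starRingEnd ℂ) (QSP n Φ x 1 0) * QSP n Φ x 1 0 = 1 := by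
  have h := (qsp_unitary n Φ hx).2
  have e := congrFun (congrFun h 0) 0
  rw [Matrix.mul_apply, Fin.sum_univ_two] at e
  simp only [Matrix.conjTranspose_apply, Matrix.one_apply_eq] at e
  exact e

lemma RphaseMat (x φ : ℝ) :
    Rmat x * phaseMat φ =
      !![(x:ℂ) * Complex.exp (φ * I), (Real.sqrt (1-x^2) : ℂ) * Complex.exp (-(φ * I));
         (Real.sqrt (1-x^2) : ℂ) * Complex.exp (φ * I), -(x:ℂ) * Complex.exp (-(φ * I))] := by
  rw [Rmat, phaseMat, Matrix.mul_fin_two]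
  congr 1 <;> ring

lemma qsp_step (n : ℕ) (Φ : ℕ → ℝ) {x : ℝ} (hx : x ∈ Set.Icc (-1:ℝ) 1) (p0 q0 : ℂ)
    (h00 : QSP n Φ x 0 0 = p0) (h10 : QSP n Φ x 1 0 = q0 * (Real.sqrt (1-x^2) : ℂ)) :
    QSP (n+1) Φ x 0 0
      = Complex.exp (Φ (n+1) * I) *
          ((x:ℂ) * p0 - (-1:ℂ)^n * (1 - (x:ℂ)^2) * (starRingEnd ℂ) q0) ∧
    QSP (n+1) Φ x 1 0
      = (Complex.exp (Φ (n+1) * I) *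
          ((x:ℂ) * q0 + (-1:ℂ)^n * (starRingEnd ℂ) p0)) * (Real.sqrt (1-x^2) : ℂ) := by
  obtain ⟨u1, u2⟩ := qsp_unitary n Φ hx
  obtain ⟨hM11, hM01⟩ := unitary_entries (QSP n Φ x) ((-1:ℂ)^n) u1 u2 (qsp_det n Φ hx)
  rw [h00] at hM11
  rw [h10] at hM01
  have hconjs : (starRingEnd ℂ) (q0 * (Real.sqrt (1-x^2) : ℂ))
      = (starRingEnd ℂ) q0 * (Real.sqrt (1-x^2) : ℂ) := by
    rw [_root_.map_mul, Complex.conj_ofReal]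
  rw [hconjs] at hM01
  have hs := s_sq hx
  have e1 : QSP (n+1) Φ x 0 0 = QSP n Φ x 0 0 * (Rmat x * phaseMat (Φ (n+1))) 0 0
      + QSP n Φ x 0 1 * (Rmat x * phaseMat (Φ (n+1))) 1 0 := by
    rw [qsp_succ, Matrix.mul_apply, Fin.sum_univ_two]
  have e2 : QSP (n+1) Φ x 1 0 = QSP n Φ x 1 0 * (Rmat x * phaseMat (Φ (n+1))) 0 0
      + QSP n Φ x 1 1 * (Rmat x * phaseMat (Φ (n+1))) 1 0 := by
    rw [qsp_succ, Matrix.mul_apply, Fin.sum_univ_two]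
  rw [RphaseMat] at e1 e2
  simp at e1 e2
  rw [h00, hM01] at e1
  rw [h10, hM11] at e2
  constructor
  · rw [e1]
    linear_combination (-(-1:ℂ)^n * Complex.exp (Φ (n+1) * I) * (starRingEnd ℂ) q0) * hs
  · rw [e2]; ring

lemma struct (n : ℕ) (Φ : ℕ → ℝ) :
    ∃ P Q : ℂ[X],
      (∀ k, n < k → P.coeff k = 0) ∧ (∀ k, n ≤ k → Q.coeff k = 0) ∧
      (∀ k, (k + n) % 2 = 1 → P.coeff k = 0) ∧ (∀ k, (k + n) % 2 = 0 → Q.coeff k = 0) ∧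
      ∀ x : ℝ, x ∈ Set.Icc (-1:ℝ) 1 →
        QSP n Φ x 0 0 = P.eval (x:ℂ) ∧
        QSP n Φ x 1 0 = Q.eval (x:ℂ) * (Real.sqrt (1-x^2) : ℂ) := by
  induction n with
  | zero =>
    refine ⟨C (Complex.exp (Φ 0 * I)), 0, ?_, ?_, ?_, ?_, ?_⟩
    · intro k hk; rw [coeff_C]; have : k ≠ 0 := by omega
      simp [this]
    · intro k _; simp
    · intro k hk; rw [coeff_C]; have : k ≠ 0 := by omega
      simp [this]
    · intro k _; simp
    · intro x hx
      rw [qsp_zero, phaseMat]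
      constructor
      · simp
      · simp
  | succ n ih =>
    obtain ⟨P', Q', hPd, hQd, hPp, hQp, hent⟩ := ih
    set a := Complex.exp (Φ (n+1) * I) with ha
    refine ⟨C a * (X * P' - C ((-1:ℂ)^n) * ((1 - X^2) * (Q'.map (starRingEnd ℂ)))),
            C a * (X * Q' + C ((-1:ℂ)^n) * (P'.map (starRingEnd ℂ))), ?_, ?_, ?_, ?_, ?_⟩
    · intro k hk
      rw [coeff_C_mul, coeff_sub, coeff_X_mul', coeff_C_mul, coeff_one_sub_X_sq_mul]
      rw [if_pos (by omega : 1 ≤ k)]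
      rw [hPd (k-1) (by omega), coeff_map, hQd k (by omega)]
      rcases Nat.lt_or_ge k 2 with h2 | h2
      · rw [if_neg (by omega)]; simp
      · rw [if_pos h2, coeff_map]
        rcases Nat.lt_or_ge (k-2) n with h3 | h3
        · -- k - 2 < n : need parity instead; k > n+1 and k-2 < n impossible? k ≥ n+2, k-2 ≥ n
          omega
        · rw [hQd (k-2) h3]; simp
    · intro k hk
      rw [coeff_C_mul, coeff_add, coeff_X_mul', coeff_C_mul, coeff_map]
      rw [if_pos (by omega : 1 ≤ k), hQd (k-1) (by omega), hPd k (by omega)]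
      simp
    · intro k hk
      rw [coeff_C_mul, coeff_sub, coeff_X_mul', coeff_C_mul, coeff_one_sub_X_sq_mul, coeff_map]
      have hq1 : Q'.coeff k = 0 := hQp k (by omega)
      rcases Nat.lt_or_ge k 1 with h1 | h1
      · rw [if_neg (by omega)]
        rw [if_neg (by omega), hq1]
        simp
      · rw [if_pos h1, hPp (k-1) (by omega), hq1]
        rcases Nat.lt_or_ge k 2 with h2 | h2
        · rw [if_neg (by omega)]; simp
        · rw [if_pos h2, coeff_map, hQp (k-2) (by omega)]; simp
    · intro k hk
      rw [coeff_C_mul, coeff_add, coeff_X_mul', coeff_C_mul, coeff_map,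
        hPp k (by omega)]
      rcases Nat.lt_or_ge k 1 with h1 | h1
      · rw [if_neg (by omega)]; simp
      · rw [if_pos h1, hQp (k-1) (by omega)]; simp
    · intro x hx
      obtain ⟨h00, h10⟩ := hent x hx
      obtain ⟨s00, s10⟩ := qsp_step n Φ hx _ _ h00 h10
      have hcq : (starRingEnd ℂ) (Q'.eval (x:ℂ)) = (Q'.map (starRingEnd ℂ)).eval (x:ℂ) :=
        conj_eval_real _ _
      have hcp : (starRingEnd ℂ) (P'.eval (x:ℂ)) = (P'.map (starRingEnd ℂ)).eval (x:ℂ) :=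
        conj_eval_real _ _
      constructor
      · rw [s00, hcq]
        simp only [eval_mul, eval_C, eval_sub, eval_add, eval_X, eval_pow, eval_one]
        ring
      · rw [s10, hcp]
        simp only [eval_mul, eval_C, eval_sub, eval_add, eval_X, eval_pow, eval_one]
        try ring

end QSPAux
namespace QSPAux

lemma sigma_sq (n : ℕ) : ((-1:ℂ)^n)^2 = 1 := by
  rw [← pow_mul, mul_comm, pow_mul]; norm_num

lemma conj_sigma (n : ℕ) : (starRingEnd ℂ) ((-1:ℂ)^n) = (-1:ℂ)^n := by
  rw [map_pow]; norm_num

lemma synth : ∀ (n : ℕ) (P Q : Polynomial ℂ),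
    (∀ k, n < k → P.coeff k = 0) → (∀ k, n ≤ k → Q.coeff k = 0) →
    (∀ k, (k + n) % 2 = 1 → P.coeff k = 0) → (∀ k, (k + n) % 2 = 0 → Q.coeff k = 0) →
    (P * P.map (starRingEnd ℂ) + (1 - X^2) * (Q * Q.map (starRingEnd ℂ)) = 1) →
    ∃ Φ : ℕ → ℝ, ∀ x : ℝ, x ∈ Set.Icc (-1:ℝ) 1 →
      QSP n Φ x 0 0 = P.eval (x:ℂ) ∧
      QSP n Φ x 1 0 = Q.eval (x:ℂ) * (Real.sqrt (1-x^2) : ℂ) := by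
  intro n
  induction n with
  | zero =>
    intro P Q hPd hQd hPp hQp hU
    have hQ0 : Q = 0 := by
      ext k; rw [hQd k (Nat.zero_le k)]; simp
    have hPC : P = C (P.coeff 0) := by
      ext k
      rcases Nat.eq_zero_or_pos k with rfl | hk
      · simp
      · rw [hPd k hk, coeff_C, if_neg (by omega)]
    set c := P.coeff 0 with hc
    have hcc : c * (starRingEnd ℂ) c = 1 := by
      have := congrArg (fun p => Polynomial.eval (0:ℂ) p) hU
      simp only [hQ0, Polynomial.map_zero, mul_zero, add_zero, eval_mul, eval_one,
        zero_mul, eval_add] at this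
      rw [hPC] at this
      simpa [conj_eval] using this
    have habs : ‖c‖ = 1 := by
      have h1 : (Complex.normSq c : ℂ) = 1 := by rw [← Complex.mul_conj]; exact hcc
      have h2 : Complex.normSq c = 1 := by exact_mod_cast h1
      rw [Complex.norm_def, h2, Real.sqrt_one]
    refine ⟨fun _ => c.arg, ?_⟩
    intro x hx
    have hexp : Complex.exp (c.arg * I) = c := by
      have := Complex.norm_mul_exp_arg_mul_I c
      rwa [habs, Complex.ofReal_one, one_mul] at this
    rw [qsp_zero]
    constructor
    · show phaseMat (c.arg) 0 0 = P.eval (x:ℂ)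
      have e0 : phaseMat (c.arg) 0 0 = Complex.exp ((c.arg : ℝ) * I) := by
        rw [phaseMat]; simp
      rw [e0, hexp, hPC, eval_C]
    · show phaseMat (c.arg) 1 0 = Q.eval (x:ℂ) * (Real.sqrt (1-x^2) : ℂ)
      have e0 : phaseMat (c.arg) 1 0 = 0 := by rw [phaseMat]; simp
      rw [e0, hQ0]; simp
  | succ n ih =>
    intro P Q hPd hQd hPp hQp hU
    set σ := (-1:ℂ)^(n+1) with hσ
    have hσ2 : σ^2 = 1 := sigma_sq (n+1)
    set p1 := P.coeff (n+1) with hp1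
    set q1 := Q.coeff n with hq1
    set Pstar := P.map (starRingEnd ℂ) with hPstar
    set Qstar := Q.map (starRingEnd ℂ) with hQstar
    have hPstarD : ∀ k, n+1 < k → Pstar.coeff k = 0 := by
      intro k hk; rw [hPstar, coeff_map, hPd k hk, map_zero]
    have hQstarD : ∀ k, n < k → Qstar.coeff k = 0 := by
      intro k hk; rw [hQstar, coeff_map, hQd k (by omega), map_zero]
    -- leading coefficient identity
    have hlead : p1 * (starRingEnd ℂ) p1 = q1 * (starRingEnd ℂ) q1 := by
      have e := congrArg (fun p => Polynomial.coeff p (2*n+2)) hU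
      simp only [coeff_add] at e
      have e1 : (P * Pstar).coeff (2*n+2) = p1 * (starRingEnd ℂ) p1 := by
        have := coeff_mul_top (a := n+1) (b := n+1) (p := P) (q := Pstar) hPd hPstarD
        rw [show (n+1) + (n+1) = 2*n+2 by omega] at this
        rw [this, hPstar, coeff_map]
      have e2 : ((1 - X^2) * (Q * Qstar)).coeff (2*n+2) = - (q1 * (starRingEnd ℂ) q1) := by
        rw [coeff_one_sub_X_sq_mul, if_pos (by omega : 2 ≤ 2*n+2)]
        have d1 : (Q * Qstar).coeff (2*n+2) = 0 :=
          coeff_mul_zero (a := n) (b := n) (p := Q) (q := Qstar)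
            (fun k hk => hQd k (by omega)) (fun k hk => hQstarD k (by omega)) (2*n+2)
            (by omega)
        have d2 : (Q * Qstar).coeff (2*n+2-2) = q1 * (starRingEnd ℂ) q1 := by
          have := coeff_mul_top (a := n) (b := n) (p := Q) (q := Qstar)
            (fun k hk => hQd k (by omega)) (fun k hk => hQstarD k (by omega))
          rw [show n + n = 2*n+2-2 by omega] at this
          rw [this, hQstar, coeff_map]
        rw [d1, d2]; ring
      rw [e1, e2] at e
      have e3 : (1 : Polynomial ℂ).coeff (2*n+2) = 0 := by
        rw [Polynomial.coeff_one]; simp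
      rw [e3] at e
      linear_combination e
    -- choose the phase
    set w : ℂ := if q1 = 0 then 1 else -σ * p1 / ((starRingEnd ℂ) q1) with hw
    have habsw : ‖w‖ = 1 := by
      rw [hw]
      split_ifs with h
      · simp
      · have hap : ‖p1‖ = ‖q1‖ := by
          have h1 : (Complex.normSq p1 : ℂ) = (Complex.normSq q1 : ℂ) := by
            rw [← Complex.mul_conj, ← Complex.mul_conj]; exact hlead
          have h2 : Complex.normSq p1 = Complex.normSq q1 := by exact_mod_cast h1
          rw [Complex.norm_def, Complex.norm_def, h2]
        have h1 : ‖-σ‖ = 1 := by rw [hσ]; simp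
        rw [norm_div, norm_mul, h1, one_mul, Complex.norm_conj, hap,
          div_self (by simpa using h : ‖q1‖ ≠ 0)]
    set φ : ℝ := w.arg / 2 with hφ
    set a := Complex.exp (φ * I) with ha
    set b := Complex.exp (-(φ * I)) with hb
    have hab : a * b = 1 := exp_mul_exp_neg φ
    have ha2 : a^2 = w := by
      rw [ha, sq, ← Complex.exp_add]
      have : (φ:ℂ) * I + (φ:ℂ) * I = (w.arg : ℂ) * I := by
        rw [hφ]; push_cast; ring
      rw [this]
      have := Complex.norm_mul_exp_arg_mul_I w
      rwa [habsw, Complex.ofReal_one, one_mul] at this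
    have hane : a ≠ 0 := Complex.exp_ne_zero _
    have key1 : b * p1 + σ * a * (starRingEnd ℂ) q1 = 0 := by
      rcases eq_or_ne q1 0 with hq | hq
      · have hp : p1 = 0 := by
          have : p1 * (starRingEnd ℂ) p1 = 0 := by rw [hlead, hq]; simp
          have h2 : (Complex.normSq p1 : ℂ) = 0 := by rw [← Complex.mul_conj]; exact this
          have h3 : Complex.normSq p1 = 0 := by exact_mod_cast h2
          exact Complex.normSq_eq_zero.mp h3
        rw [hp, hq]; simp
      · have hqc : (starRingEnd ℂ) q1 ≠ 0 := by
          simpa using hq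
        have hwx : a^2 * (starRingEnd ℂ) q1 = -σ * p1 := by
          rw [ha2, hw, if_neg hq, div_mul_cancel₀ _ hqc]
        have hmul : a * (b * p1 + σ * a * (starRingEnd ℂ) q1) = 0 := by
          have e : a * (b * p1 + σ * a * (starRingEnd ℂ) q1)
              = (a * b) * p1 + σ * (a^2 * (starRingEnd ℂ) q1) := by ring
          rw [e, hab, hwx, one_mul]
          linear_combination (-p1 : ℂ) * hσ2
        rcases mul_eq_zero.mp hmul with h | h
        · exact absurd h hane
        · exact h
    have hconja : (starRingEnd ℂ) a = b := by rw [ha, hb, conj_expI]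
    have hconjb : (starRingEnd ℂ) b = a := by rw [ha, hb, conj_expI']
    have hconjσ : (starRingEnd ℂ) σ = σ := by rw [hσ]; exact conj_sigma (n+1)
    have key2 : b * q1 + σ * a * (starRingEnd ℂ) p1 = 0 := by
      have h := congrArg (starRingEnd ℂ) key1
      simp only [map_add, _root_.map_mul, map_zero, Complex.conj_conj,
        hconja, hconjb, hconjσ] at h
      -- h : a * conj p1 + σ * (b * q1) = 0 (up to assoc)
      calc b * q1 + σ * a * (starRingEnd ℂ) p1
          = σ * (a * (starRingEnd ℂ) p1 + σ * b * q1) + (1 - σ^2) * (b * q1) := by ring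
        _ = σ * 0 + (1 - σ^2) * (b * q1) := by rw [h]
        _ = 0 := by rw [hσ2]; ring
    -- the reduced pair
    set P' := C b * (X * P) - C σ * C a * ((1 - X^2) * Qstar) with hP'
    set Q' := C b * (X * Q) + C σ * C a * Pstar with hQ'
    have hP'star : P'.map (starRingEnd ℂ) = C a * (X * Pstar) - C σ * C b * ((1 - X^2) * Q) := by
      rw [hP', hQstar]
      simp only [Polynomial.map_sub, Polynomial.map_mul, Polynomial.map_C, Polynomial.map_X,
        Polynomial.map_one, Polynomial.map_pow, map_conj_map_conj, hconja, hconjb, hconjσ,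
        ← hPstar]
    have hQ'star : Q'.map (starRingEnd ℂ) = C a * (X * Qstar) + C σ * C b * P := by
      rw [hQ', hPstar]
      simp only [Polynomial.map_add, Polynomial.map_mul, Polynomial.map_C, Polynomial.map_X,
        map_conj_map_conj, hconja, hconjb, hconjσ, ← hQstar]
    have hCab : (C a : Polynomial ℂ) * C b = 1 := by
      rw [← C_mul, hab, C_1]
    have hCσ : (C σ : Polynomial ℂ)^2 = 1 := by
      rw [← C_pow, hσ2, C_1]
    have hU' : P' * P'.map (starRingEnd ℂ)
        + (1 - X^2) * (Q' * Q'.map (starRingEnd ℂ)) = 1 := by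
      rw [hP'star, hQ'star, hP', hQ']
      linear_combination (1 : Polynomial ℂ) * hCab
        + (C a * C b * (1 - X^2)) * hCσ
        + (C a * C b * (X^2 + (C σ)^2 * (1 - X^2))) * hU
    -- degree and parity facts for the reduced pair
    have hP'd : ∀ k, n < k → P'.coeff k = 0 := by
      intro k hk
      rw [hP', mul_assoc (C σ), coeff_sub, coeff_C_mul, coeff_C_mul, coeff_C_mul, coeff_X_mul',
        coeff_one_sub_X_sq_mul, if_pos (by omega : 1 ≤ k)]
      rcases (by omega : k = n+1 ∨ k = n+2 ∨ n+3 ≤ k) with rfl | h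
      · rw [show n+1-1 = n by omega, hPp n (by omega), hQstarD (n+1) (by omega)]
        rcases Nat.lt_or_ge (n+1) 2 with h2 | h2
        · rw [if_neg (by omega)]; simp
        · rw [if_pos h2, hQstar, coeff_map, hQp (n+1-2) (by omega)]; simp
      rcases h with rfl | h
      · rw [if_pos (by omega), hQstar, coeff_map, coeff_map, hQd (n+2) (by omega),
          show n+2-1 = n+1 by omega, show n+2-2 = n by omega]
        rw [← hp1, ← hq1]
        simp only [map_zero, zero_sub]
        linear_combination key1
      · rw [if_pos (by omega), hPd (k-1) (by omega), hQstarD k (by omega),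
          hQstarD (k-2) (by omega)]
        simp
    have hQ'd : ∀ k, n ≤ k → Q'.coeff k = 0 := by
      intro k hk
      rw [hQ', mul_assoc (C σ), coeff_add, coeff_C_mul, coeff_C_mul, coeff_C_mul, coeff_X_mul']
      rcases (by omega : k = n ∨ k = n+1 ∨ n+2 ≤ k) with rfl | h
      · rcases Nat.eq_zero_or_pos k with rfl | hk0
        · rw [if_neg (by omega), hPstar, coeff_map, hPp 0 (by omega)]
          simp
        · rw [if_pos (by omega), hQp (k-1) (by omega), hPstar, coeff_map, hPp k (by omega)]
          simp
      rcases h with rfl | h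
      · rw [if_pos (by omega), show n+1-1 = n by omega, hPstar, coeff_map, ← hq1, ← hp1]
        linear_combination key2
      · rw [if_pos (by omega), hQd (k-1) (by omega), hPstarD k (by omega)]
        simp
    have hP'p : ∀ k, (k + n) % 2 = 1 → P'.coeff k = 0 := by
      intro k hk
      rw [hP', mul_assoc (C σ), coeff_sub, coeff_C_mul, coeff_C_mul, coeff_C_mul, coeff_X_mul',
        coeff_one_sub_X_sq_mul, hQstar, coeff_map, hQp k (by omega)]
      rcases Nat.lt_or_ge k 1 with h1 | h1
      · rw [if_neg (by omega), if_neg (by omega)]; simp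
      · rw [if_pos h1, hPp (k-1) (by omega)]
        rcases Nat.lt_or_ge k 2 with h2 | h2
        · rw [if_neg (by omega)]; simp
        · rw [if_pos h2, coeff_map, hQp (k-2) (by omega)]; simp
    have hQ'p : ∀ k, (k + n) % 2 = 0 → Q'.coeff k = 0 := by
      intro k hk
      rw [hQ', mul_assoc (C σ), coeff_add, coeff_C_mul, coeff_C_mul, coeff_C_mul, coeff_X_mul',
        hPstar, coeff_map, hPp k (by omega)]
      rcases Nat.lt_or_ge k 1 with h1 | h1
      · rw [if_neg (by omega)]; simp
      · rw [if_pos h1, hQp (k-1) (by omega)]; simp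
    obtain ⟨Φ', hent'⟩ := ih P' Q' hP'd hQ'd hP'p hQ'p hU'
    set Φf : ℕ → ℝ := fun j => if j = n+1 then φ else Φ' j with hΦf
    refine ⟨Φf, ?_⟩
    intro x hx
    have hcong : QSP n Φf x = QSP n Φ' x := by
      apply qsp_congr
      intro j hj
      simp only [hΦf]
      rw [if_neg (by omega)]
    obtain ⟨h00', h10'⟩ := hent' x hx
    obtain ⟨s00, s10⟩ := qsp_step n Φf hx
      (P'.eval (x:ℂ)) (Q'.eval (x:ℂ)) (by rw [hcong]; exact h00') (by rw [hcong]; exact h10')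
    have hphi : Φf (n+1) = φ := by simp [hΦf]
    rw [hphi] at s00 s10
    have hσn : (-1:ℂ)^n = -σ := by
      rw [hσ, pow_succ]; ring
    have hcq : (starRingEnd ℂ) (Q'.eval (x:ℂ)) = (Q'.map (starRingEnd ℂ)).eval (x:ℂ) :=
      conj_eval_real _ _
    have hcp : (starRingEnd ℂ) (P'.eval (x:ℂ)) = (P'.map (starRingEnd ℂ)).eval (x:ℂ) :=
      conj_eval_real _ _
    constructor
    · rw [s00, hσn, hcq, hQ'star]
      simp only [eval_mul, eval_add, eval_sub, eval_C, eval_X, eval_pow, eval_one]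
      rw [hP']
      simp only [eval_mul, eval_add, eval_sub, eval_C, eval_X, eval_pow, eval_one]
      set pv := P.eval (x:ℂ)
      set qsv := Qstar.eval (x:ℂ)
      linear_combination (pv*(x:ℂ)^2 + pv*(1-(x:ℂ)^2)*σ^2) * hab + (pv*(1-(x:ℂ)^2)) * hσ2
    · rw [s10, hσn, hcp, hP'star]
      simp only [eval_mul, eval_add, eval_sub, eval_C, eval_X, eval_pow, eval_one]
      rw [hQ']
      simp only [eval_mul, eval_add, eval_sub, eval_C, eval_X, eval_pow, eval_one]
      set qv := Q.eval (x:ℂ)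
      set psv := Pstar.eval (x:ℂ)
      linear_combination ((qv*(x:ℂ)^2 + qv*(1-(x:ℂ)^2)*σ^2) * hab + (qv*(1-(x:ℂ)^2)) * hσ2) * ((Real.sqrt (1-x^2) : ℝ) : ℂ)

end QSPAux
namespace QSPAux

/-- weighted two-square forms -/
def IsForm (m : ℕ) (A : Polynomial ℝ) : Prop :=
  ∃ b c : Polynomial ℝ,
    (∀ k, (k + m) % 2 = 1 → b.coeff k = 0) ∧ (∀ k, m < k → b.coeff k = 0) ∧
    (∀ k, (k + m) % 2 = 0 → c.coeff k = 0) ∧ (∀ k, m ≤ k → c.coeff k = 0) ∧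
    A = b^2 + (1 - X^2) * c^2

lemma isForm_congr {m : ℕ} {A A' : Polynomial ℝ} (h : A = A') (hF : IsForm m A) :
    IsForm m A' := h ▸ hF

lemma isForm_zero (m : ℕ) : IsForm m 0 :=
  ⟨0, 0, by simp, by simp, by simp, by simp, by simp⟩

lemma coeff_mul_zero' {R : Type*} [CommRing R] {a b : ℕ} {p q : R[X]}
    (hp : ∀ k, a ≤ k → p.coeff k = 0) (hq : ∀ k, b ≤ k → q.coeff k = 0) :
    ∀ k, a + b ≤ k + 1 → (p * q).coeff k = 0 := by
  intro k hk
  rw [coeff_mul]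
  apply Finset.sum_eq_zero
  rintro ⟨i, j⟩ hij
  have hij2 : i + j = k := Finset.HasAntidiagonal.mem_antidiagonal.mp hij
  by_cases h : a ≤ i
  · simp [hp i h]
  · simp [hq j (by omega)]

lemma coeff_mul_zero'' {R : Type*} [CommRing R] {a b : ℕ} {p q : R[X]}
    (hp : ∀ k, a < k → p.coeff k = 0) (hq : ∀ k, b ≤ k → q.coeff k = 0) :
    ∀ k, a + b ≤ k → (p * q).coeff k = 0 := by
  intro k hk
  rw [coeff_mul]
  apply Finset.sum_eq_zero
  rintro ⟨i, j⟩ hij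
  have hij2 : i + j = k := Finset.HasAntidiagonal.mem_antidiagonal.mp hij
  by_cases h : a < i
  · simp [hp i h]
  · simp [hq j (by omega)]

lemma isForm_mul {m₁ m₂ : ℕ} {A₁ A₂ : Polynomial ℝ} (h₁ : IsForm m₁ A₁) (h₂ : IsForm m₂ A₂) :
    IsForm (m₁ + m₂) (A₁ * A₂) := by
  obtain ⟨b₁, c₁, hb₁p, hb₁d, hc₁p, hc₁d, hA₁⟩ := h₁
  obtain ⟨b₂, c₂, hb₂p, hb₂d, hc₂p, hc₂d, hA₂⟩ := h₂
  refine ⟨b₁*b₂ - (1 - X^2)*(c₁*c₂), b₁*c₂ + c₁*b₂, ?_, ?_, ?_, ?_, ?_⟩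
  · intro k hk
    rw [coeff_sub, par_mul hb₁p hb₂p k (by omega), coeff_one_sub_X_sq_mul]
    have hcc : ∀ j, (j + (m₁ + m₂)) % 2 = 1 → (c₁*c₂).coeff j = 0 := by
      intro j hj
      exact par_mul (a := m₁+1) (b := m₂+1) (fun k hk => hc₁p k (by omega))
        (fun k hk => hc₂p k (by omega)) j (by omega)
    rw [hcc k (by omega)]
    rcases Nat.lt_or_ge k 2 with h2 | h2
    · rw [if_neg (by omega)]; simp
    · rw [if_pos h2, hcc (k-2) (by omega)]; simp
  · intro k hk
    rw [coeff_sub, coeff_mul_zero hb₁d hb₂d k (by omega), coeff_one_sub_X_sq_mul]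
    rw [coeff_mul_zero' hc₁d hc₂d k (by omega)]
    rcases Nat.lt_or_ge k 2 with h2 | h2
    · rw [if_neg (by omega)]; simp
    · rw [if_pos h2, coeff_mul_zero' hc₁d hc₂d (k-2) (by omega)]; simp
  · intro k hk
    have h1 : (b₁ * c₂).coeff k = 0 :=
      par_mul (a := m₁) (b := m₂+1) hb₁p (fun j hj => hc₂p j (by omega)) k (by omega)
    have h2 : (c₁ * b₂).coeff k = 0 :=
      par_mul (a := m₁+1) (b := m₂) (fun j hj => hc₁p j (by omega)) hb₂p k (by omega)
    rw [coeff_add, h1, h2]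
    simp
  · intro k hk
    rw [coeff_add, coeff_mul_zero'' (a := m₁) (b := m₂) hb₁d hc₂d k (by omega)]
    have : (c₁ * b₂).coeff k = 0 := by
      rw [mul_comm]
      exact coeff_mul_zero'' (a := m₂) (b := m₁) hb₂d hc₁d k (by omega)
    rw [this]; simp
  · rw [hA₁, hA₂]; ring

lemma isForm_one : IsForm 1 1 := by
  refine ⟨X, 1, ?_, ?_, ?_, ?_, by ring⟩
  · intro k hk
    rw [coeff_X, if_neg (by omega)]
  · intro k hk
    rw [coeff_X, if_neg (by omega)]
  · intro k hk
    rw [coeff_one, if_neg (by omega)]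
  · intro k hk
    rw [coeff_one, if_neg (by omega)]

lemma isForm_promote {m : ℕ} {A : Polynomial ℝ} (h : IsForm m A) : IsForm (m+1) A := by
  have := isForm_mul h isForm_one
  rw [mul_one] at this
  exact this

lemma isForm_promote_le {m m' : ℕ} (hm : m ≤ m') {A : Polynomial ℝ} (h : IsForm m A) :
    IsForm m' A := by
  induction m' with
  | zero => rwa [Nat.le_zero.mp hm] at h
  | succ n ih =>
    rcases Nat.lt_or_ge m (n+1) with h1 | h1
    · exact isForm_promote (ih (by omega))
    · rwa [show m = n+1 by omega] at h

lemma isForm_const {e : ℝ} (he : 0 ≤ e) : IsForm 0 (C e) := by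
  refine ⟨C (Real.sqrt e), 0, ?_, ?_, by simp, by simp, ?_⟩
  · intro k hk
    rw [coeff_C, if_neg (by omega)]
  · intro k hk
    rw [coeff_C, if_neg (by omega)]
  · rw [← C_pow, Real.sq_sqrt he]
    ring

lemma isForm_sq (r : ℝ) : IsForm 2 ((X^2 - C r)^2) := by
  refine ⟨X^2 - C r, 0, ?_, ?_, by simp, by simp, by ring⟩
  · intro k hk
    rw [coeff_sub, coeff_X_pow, coeff_C, if_neg (by omega), if_neg (by omega)]
    simp
  · intro k hk
    rw [coeff_sub, coeff_X_pow, coeff_C, if_neg (by omega), if_neg (by omega)]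
    simp

lemma isForm_linear_le {r : ℝ} (hr : r ≤ 0) : IsForm 1 (X^2 - C r) := by
  refine ⟨C (Real.sqrt (1-r)) * X, C (Real.sqrt (-r)), ?_, ?_, ?_, ?_, ?_⟩
  · intro k hk
    rw [coeff_C_mul, coeff_X, if_neg (by omega)]
    simp
  · intro k hk
    rw [coeff_C_mul, coeff_X, if_neg (by omega)]
    simp
  · intro k hk
    rw [coeff_C, if_neg (by omega)]
  · intro k hk
    rw [coeff_C, if_neg (by omega)]
  · have E1 : (C (Real.sqrt (1-r)) : Polynomial ℝ)^2 = 1 - C r := by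
      rw [← C_pow, Real.sq_sqrt (by linarith : (0:ℝ) ≤ 1-r)]
      simp [C_sub]
    have E2 : (C (Real.sqrt (-r)) : Polynomial ℝ)^2 = - C r := by
      rw [← C_pow, Real.sq_sqrt (by linarith : (0:ℝ) ≤ -r)]
      simp
    linear_combination (-(X^2) : Polynomial ℝ) * E1 - ((1:Polynomial ℝ) - X^2) * E2

lemma isForm_linear_ge {r : ℝ} (hr : 1 ≤ r) : IsForm 1 (C r - X^2) := by
  refine ⟨C (Real.sqrt (r-1)) * X, C (Real.sqrt r), ?_, ?_, ?_, ?_, ?_⟩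
  · intro k hk
    rw [coeff_C_mul, coeff_X, if_neg (by omega)]
    simp
  · intro k hk
    rw [coeff_C_mul, coeff_X, if_neg (by omega)]
    simp
  · intro k hk
    rw [coeff_C, if_neg (by omega)]
  · intro k hk
    rw [coeff_C, if_neg (by omega)]
  · have E1 : (C (Real.sqrt (r-1)) : Polynomial ℝ)^2 = C r - 1 := by
      rw [← C_pow, Real.sq_sqrt (by linarith : (0:ℝ) ≤ r-1)]
      simp [C_sub]
    have E2 : (C (Real.sqrt r) : Polynomial ℝ)^2 = C r := by
      rw [← C_pow, Real.sq_sqrt (by linarith : (0:ℝ) ≤ r)]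
    linear_combination (-(X^2) : Polynomial ℝ) * E1 - ((1:Polynomial ℝ) - X^2) * E2

lemma isForm_quad {p q : ℝ} (hpq : p^2 < 4*q) : IsForm 2 ((X^2)^2 + C p * X^2 + C q) := by
  have hq : 0 < q := by nlinarith [sq_nonneg p]
  set β := Real.sqrt q with hβdef
  have hβ : β^2 = q := Real.sq_sqrt hq.le
  have ht0 : (0:ℝ) ≤ q + 1 + p := by nlinarith [sq_nonneg (q-1), sq_nonneg (p+q+1)]
  set t := Real.sqrt (q + 1 + p) with htdef
  have ht : t^2 = q + 1 + p := Real.sq_sqrt ht0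
  have htn : 0 ≤ t := Real.sqrt_nonneg _
  have hβn : 0 ≤ β := Real.sqrt_nonneg _
  have hγ0 : (0:ℝ) ≤ p + 2*q + 2*(β*t) := by
    nlinarith [sq_nonneg (2*(β*t) + p + 2*q), sq_nonneg (2*(β*t) - p - 2*q), mul_nonneg hβn htn]
  set γ := Real.sqrt (p + 2*q + 2*(β*t)) with hγdef
  have hγ : γ^2 = p + 2*q + 2*(β*t) := Real.sq_sqrt hγ0
  set α := -(β + t) with hαdef
  have hα : α^2 = q + 2*(β*t) + (q+1+p) := by
    rw [hαdef, neg_pow]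
    have : (β + t)^2 = β^2 + 2*(β*t) + t^2 := by ring
    rw [show (-1:ℝ)^2 = 1 by norm_num, one_mul, this, hβ, ht]
  have e1 : α^2 - γ^2 = 1 := by rw [hα, hγ]; ring
  have e2 : 2*α*β + γ^2 = p := by
    rw [hγ, hαdef]
    have : 2*(-(β+t))*β = -2*β^2 - 2*(β*t) := by ring
    rw [this, hβ]
    ring
  refine ⟨C α * X^2 + C β, C γ * X, ?_, ?_, ?_, ?_, ?_⟩
  · intro k hk
    rw [coeff_add, coeff_C_mul, coeff_X_pow, coeff_C, if_neg (by omega), if_neg (by omega)]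
    simp
  · intro k hk
    rw [coeff_add, coeff_C_mul, coeff_X_pow, coeff_C, if_neg (by omega), if_neg (by omega)]
    simp
  · intro k hk
    rw [coeff_C_mul, coeff_X, if_neg (by omega)]
    simp
  · intro k hk
    rw [coeff_C_mul, coeff_X, if_neg (by omega)]
    simp
  · have E1 : (C α : Polynomial ℝ)^2 - (C γ)^2 = 1 := by
      rw [← C_pow, ← C_pow, ← C_sub, e1, C_1]
    have E2 : 2 * C α * C β + (C γ)^2 = C p := by
      rw [← C_pow]
      have h2 : (2 : Polynomial ℝ) * C α * C β = C (2*α*β) := by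
        rw [← map_ofNat (C : ℝ →+* Polynomial ℝ) 2, ← C_mul, ← C_mul]
      rw [h2, ← C_add, e2]
    have E3 : (C β : Polynomial ℝ)^2 = C q := by rw [← C_pow, hβ]
    linear_combination (-(X^2:Polynomial ℝ)^2) * E1 - (X^2 : Polynomial ℝ) * E2 - E3

end QSPAux
namespace QSPAux

lemma Hright (g : Polynomial ℝ) (r : ℝ) (hr : r < 1)
    (h : ∀ y : ℝ, r < y → y ≤ 1 → 0 ≤ g.eval y) : 0 ≤ g.eval r := by
  have ht : Filter.Tendsto (fun y => g.eval y) (nhdsWithin r (Set.Ioi r)) (nhds (g.eval r)) :=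
    (g.continuous.tendsto r).mono_left nhdsWithin_le_nhds
  apply ge_of_tendsto ht
  filter_upwards [Ioo_mem_nhdsGT_of_mem (⟨le_refl r, hr⟩ : r ∈ Set.Ico r 1)] with y hy
  exact h y hy.1 hy.2.le

lemma Hleft (g : Polynomial ℝ) (r : ℝ) (hr : 0 < r)
    (h : ∀ y : ℝ, 0 ≤ y → y < r → 0 ≤ g.eval y) : 0 ≤ g.eval r := by
  have ht : Filter.Tendsto (fun y => g.eval y) (nhdsWithin r (Set.Iio r)) (nhds (g.eval r)) :=
    (g.continuous.tendsto r).mono_left nhdsWithin_le_nhds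
  apply ge_of_tendsto ht
  filter_upwards [Ioo_mem_nhdsLT_of_mem (⟨half_lt_self hr, le_refl r⟩ : r ∈ Set.Ioc (r/2) r)]
    with y hy
  exact h y (le_of_lt (lt_of_lt_of_le (half_pos hr) hy.1.le)) hy.2

lemma conj_algebraMap_comm :
    (starRingEnd ℂ).comp (algebraMap ℝ ℂ) = algebraMap ℝ ℂ := by
  ext r
  simp [Complex.conj_ofReal]

lemma nonneg_factor {a b : ℝ} (h : 0 ≤ a * b) (ha : 0 < a) : 0 ≤ b := by
  by_contra hc
  push_neg at hc
  nlinarith [mul_pos ha (neg_pos.mpr hc)]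

lemma lukacs : ∀ d : ℕ, ∀ E : Polynomial ℝ, E.natDegree ≤ d →
    (∀ y : ℝ, 0 ≤ y → y ≤ 1 → 0 ≤ E.eval y) → IsForm d (E.comp (X^2)) := by
  intro d
  induction d using Nat.strong_induction_on with
  | _ d IH =>
  intro E hdeg hpos
  by_cases hE0 : E = 0
  · rw [hE0]
    simpa using isForm_zero d
  rcases Nat.eq_zero_or_pos d with rfl | hd
  · have hE : E = C (E.coeff 0) := eq_C_of_natDegree_le_zero hdeg
    rw [hE, C_comp]
    apply isForm_const
    have := hpos 0 le_rfl zero_le_one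
    rwa [hE, eval_C] at this
  by_cases hdlt : E.natDegree < d
  · have h := IH (d-1) (by omega) E (by omega) hpos
    have := isForm_promote h
    rwa [show d - 1 + 1 = d by omega] at this
  have hdeq : E.natDegree = d := by omega
  by_cases hroot : ∃ r : ℝ, E.IsRoot r
  · obtain ⟨r, hr⟩ := hroot
    obtain ⟨E₁, hE₁⟩ := (dvd_iff_isRoot).mpr hr
    have hE₁ne : E₁ ≠ 0 := by
      intro h; rw [h, mul_zero] at hE₁; exact hE0 hE₁
    have hdeg₁ : E₁.natDegree = d - 1 := by
      have := natDegree_mul (X_sub_C_ne_zero r) hE₁ne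
      rw [← hE₁, natDegree_X_sub_C] at this
      omega
    rcases le_or_gt r 0 with hr0 | hrpos
    · -- r ≤ 0
      have hpos₁ : ∀ y : ℝ, 0 ≤ y → y ≤ 1 → 0 ≤ E₁.eval y := by
        have base : ∀ y : ℝ, 0 ≤ y → r < y → y ≤ 1 → 0 ≤ E₁.eval y := by
          intro y hy0 hy hy1
          have hE : E.eval y = (y - r) * E₁.eval y := by rw [hE₁]; simp
          have h2 := hpos y hy0 hy1
          rw [hE] at h2
          exact nonneg_factor h2 (by linarith)
        intro y hy0 hy1
        rcases lt_or_ge r y with h | h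
        · exact base y hy0 h hy1
        · have hy : y = 0 := le_antisymm (by linarith) hy0
          have hr' : r = 0 := by linarith
          subst hy
          apply Hright E₁ 0 one_pos
          intro z hz hz1
          exact base z hz.le (by rw [hr']; exact hz) hz1
      have h1 := IH (d-1) (by omega) E₁ (by omega) hpos₁
      have h2 := isForm_mul (isForm_linear_le hr0) h1
      rw [show 1 + (d-1) = d by omega] at h2
      apply isForm_congr _ h2
      rw [hE₁, mul_comp, sub_comp, X_comp, C_comp]
    · rcases le_or_gt 1 r with hr1 | hrin
      · -- r ≥ 1
        have base : ∀ y : ℝ, 0 ≤ y → y ≤ 1 → y < r → 0 ≤ (-E₁).eval y := by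
          intro y hy0 hy1 hyr
          have hE : E.eval y = (y - r) * E₁.eval y := by rw [hE₁]; simp
          have := hpos y hy0 hy1
          rw [hE] at this
          rw [eval_neg]
          nlinarith
        have hpos₁ : ∀ y : ℝ, 0 ≤ y → y ≤ 1 → 0 ≤ (-E₁).eval y := by
          intro y hy0 hy1
          rcases lt_or_ge y r with h | h
          · exact base y hy0 hy1 h
          · -- r ≤ y ≤ 1 ≤ r so y = r = 1
            have hy : y = 1 := le_antisymm hy1 (le_trans hr1 h)
            have hr' : r = 1 := le_antisymm (by linarith) hr1
            subst hy
            apply Hleft (-E₁) 1 one_pos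
            intro z hz0 hz1
            exact base z hz0 hz1.le (by linarith)
        have h1 := IH (d-1) (by omega) (-E₁) (by simpa using (by omega : E₁.natDegree ≤ d-1))
          hpos₁
        have h2 := isForm_mul (isForm_linear_ge hr1) h1
        rw [show 1 + (d-1) = d by omega] at h2
        apply isForm_congr _ h2
        rw [show E = (C r - X) * (-E₁) by rw [hE₁]; ring, mul_comp, sub_comp, X_comp, C_comp,
          neg_comp]
      · -- 0 < r < 1
        have hbr : ∀ y : ℝ, r < y → y ≤ 1 → 0 ≤ E₁.eval y := by
          intro y hy hy1
          have hE : E.eval y = (y - r) * E₁.eval y := by rw [hE₁]; simp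
          have h2 := hpos y (by linarith) hy1
          rw [hE] at h2
          exact nonneg_factor h2 (by linarith)
        have hbl : ∀ y : ℝ, 0 ≤ y → y < r → 0 ≤ (-E₁).eval y := by
          intro y hy0 hyr
          have hE : E.eval y = (y - r) * E₁.eval y := by rw [hE₁]; simp
          have := hpos y hy0 (by linarith)
          rw [hE] at this
          rw [eval_neg]
          nlinarith
        have hE₁r : E₁.eval r = 0 := by
          have h1 : 0 ≤ E₁.eval r := Hright E₁ r hrin hbr
          have h2 : 0 ≤ (-E₁).eval r := Hleft (-E₁) r hrpos hbl
          rw [eval_neg] at h2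
          linarith
        obtain ⟨E₂, hE₂⟩ := (dvd_iff_isRoot).mpr hE₁r
        have hE₂ne : E₂ ≠ 0 := by
          intro h; rw [h, mul_zero] at hE₂; exact hE₁ne hE₂
        have hE' : E = (X - C r)^2 * E₂ := by rw [hE₁, hE₂]; ring
        have hdeg₂ : E₂.natDegree = d - 2 := by
          have := natDegree_mul (X_sub_C_ne_zero r) hE₂ne
          rw [← hE₂, natDegree_X_sub_C] at this
          omega
        have hd2 : 2 ≤ d := by
          have := natDegree_mul (X_sub_C_ne_zero r) hE₂ne
          rw [← hE₂, natDegree_X_sub_C] at this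
          omega
        have hpos₂ : ∀ y : ℝ, 0 ≤ y → y ≤ 1 → 0 ≤ E₂.eval y := by
          have base : ∀ y : ℝ, 0 ≤ y → y ≤ 1 → y ≠ r → 0 ≤ E₂.eval y := by
            intro y hy0 hy1 hyr
            have hE : E.eval y = (y - r)^2 * E₂.eval y := by rw [hE']; simp
            have := hpos y hy0 hy1
            rw [hE] at this
            have hsq : 0 < (y - r)^2 :=
              lt_of_le_of_ne (sq_nonneg _) (Ne.symm (pow_ne_zero 2 (sub_ne_zero.mpr hyr)))
            exact nonneg_factor this hsq
          intro y hy0 hy1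
          rcases eq_or_ne y r with rfl | h
          · apply Hright E₂ y hrin
            intro z hz hz1
            exact base z (by linarith) hz1 (by linarith [hz])
          · exact base y hy0 hy1 h
        have h1 := IH (d-2) (by omega) E₂ (by omega) hpos₂
        have h2 := isForm_mul (isForm_sq r) h1
        rw [show 2 + (d-2) = d by omega] at h2
        apply isForm_congr _ h2
        rw [hE', mul_comp, pow_comp, sub_comp, X_comp, C_comp]
  · -- no real root : extract a complex conjugate pair
    push_neg at hroot
    have hmapne : 0 < (E.map (algebraMap ℝ ℂ)).degree := by
      rw [Polynomial.degree_map_eq_of_injective (algebraMap ℝ ℂ).injective]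
      exact natDegree_pos_iff_degree_pos.mp (by omega)
    obtain ⟨z, hz⟩ := Complex.exists_root hmapne
    have hzim : z.im ≠ 0 := by
      intro him
      apply hroot z.re
      have hzre : ((z.re : ℝ) : ℂ) = z := by
        apply Complex.ext <;> simp [him]
      have h0 : (E.map (algebraMap ℝ ℂ)).eval ((algebraMap ℝ ℂ) z.re) = 0 := by
        show (E.map (algebraMap ℝ ℂ)).eval ((z.re : ℝ) : ℂ) = 0
        rw [hzre]
        exact hz
      rw [Polynomial.eval_map, eval₂_at_apply] at h0
      rw [show (algebraMap ℝ ℂ) (E.eval z.re) = ((E.eval z.re : ℝ) : ℂ) from rfl] at h0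
      exact_mod_cast h0
    have hconjroot : (E.map (algebraMap ℝ ℂ)).IsRoot ((starRingEnd ℂ) z) := by
      have h1 := conj_eval (E.map (algebraMap ℝ ℂ)) z
      rw [hz.eq_zero, map_zero] at h1
      rw [Polynomial.map_map, conj_algebraMap_comm] at h1
      exact h1.symm
    obtain ⟨M₁, hM₁⟩ := (dvd_iff_isRoot).mpr hz
    have hM₁root : M₁.IsRoot ((starRingEnd ℂ) z) := by
      have := hconjroot
      rw [hM₁] at this
      unfold Polynomial.IsRoot at this
      rw [eval_mul] at this
      rcases mul_eq_zero.mp this with h | h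
      · exfalso
        rw [eval_sub, eval_X, eval_C, sub_eq_zero] at h
        exact hzim (Complex.conj_eq_iff_im.mp h)
      · exact h
    obtain ⟨M₂, hM₂⟩ := (dvd_iff_isRoot).mpr hM₁root
    set pp := -(2*z.re) with hpp
    set qq := Complex.normSq z with hqq
    have hfact : (X^2 + C pp * X + C qq).map (algebraMap ℝ ℂ)
        = (X - C z) * (X - C ((starRingEnd ℂ) z)) := by
      have hsum : C z + C ((starRingEnd ℂ) z) = - C ((pp : ℝ) : ℂ) := by
        rw [← C_add, ← C_neg]
        congr 1
        rw [Complex.add_conj, hpp]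
        push_cast
        ring
      have hprod : C z * C ((starRingEnd ℂ) z) = C ((qq : ℝ) : ℂ) := by
        rw [← C_mul]
        congr 1
        rw [Complex.mul_conj, hqq]
      simp only [Polynomial.map_add, Polynomial.map_mul, Polynomial.map_pow,
        Polynomial.map_X, Polynomial.map_C]
      have : (algebraMap ℝ ℂ) pp = ((pp:ℝ):ℂ) := rfl
      rw [this, show (algebraMap ℝ ℂ) qq = ((qq:ℝ):ℂ) from rfl]
      linear_combination (X : Polynomial ℂ) * hsum - hprod
    have hdvd : (X^2 + C pp * X + C qq) ∣ E := by
      rw [← Polynomial.map_dvd_map' (algebraMap ℝ ℂ), hfact]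
      exact ⟨M₂, by rw [hM₁, hM₂]; ring⟩
    obtain ⟨E₂, hE₂⟩ := hdvd
    have hQpos : ∀ y : ℝ, 0 < (X^2 + C pp * X + C qq).eval y := by
      intro y
      simp only [eval_add, eval_mul, eval_pow, eval_X, eval_C]
      rw [hpp, hqq, Complex.normSq_apply]
      have him : 0 < z.im^2 :=
        lt_of_le_of_ne (sq_nonneg _) (Ne.symm (pow_ne_zero 2 hzim))
      nlinarith [sq_nonneg (y - z.re)]
    have hE₂ne : E₂ ≠ 0 := by
      intro h; rw [h, mul_zero] at hE₂; exact hE0 hE₂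
    have hQne : (X^2 + C pp * X + C qq) ≠ (0 : Polynomial ℝ) := by
      intro h
      have := hQpos 0
      rw [h] at this
      simp at this
    have hQdeg : (X^2 + C pp * X + C qq).natDegree = 2 := by
      have h : (X^2 + C pp * X + C qq) = C 1 * X^2 + C pp * X + C qq := by simp
      rw [h]
      exact natDegree_quadratic one_ne_zero
    have hdeg₂ : E₂.natDegree = d - 2 ∧ 2 ≤ d := by
      have := natDegree_mul hQne hE₂ne
      rw [← hE₂, hQdeg] at this
      omega
    have hpos₂ : ∀ y : ℝ, 0 ≤ y → y ≤ 1 → 0 ≤ E₂.eval y := by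
      intro y hy0 hy1
      have hE : E.eval y = (X^2 + C pp * X + C qq).eval y * E₂.eval y := by
        rw [hE₂, eval_mul]
      have := hpos y hy0 hy1
      rw [hE] at this
      exact nonneg_factor this (hQpos y)
    have hp2 : pp^2 < 4*qq := by
      rw [hpp, hqq, Complex.normSq_apply]
      have him : 0 < z.im^2 :=
        lt_of_le_of_ne (sq_nonneg _) (Ne.symm (pow_ne_zero 2 hzim))
      nlinarith
    have h1 := IH (d-2) (by omega) E₂ (by omega) hpos₂
    have h2 := isForm_mul (isForm_quad hp2) h1
    rw [show 2 + (d-2) = d by omega] at h2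
    apply isForm_congr _ h2
    rw [hE₂, mul_comp, add_comp, add_comp, mul_comp, pow_comp, X_comp, C_comp, C_comp]

end QSPAux
namespace QSPAux

lemma exists_half (A : Polynomial ℝ) (hpar : ∀ k, k % 2 = 1 → A.coeff k = 0) :
    ∃ E : Polynomial ℝ, E.comp (X^2) = A ∧ ∀ k, E.coeff k = 0 ∨ E.coeff k = A.coeff (2*k) := by
  refine ⟨∑ k ∈ Finset.range (A.natDegree + 1), C (A.coeff (2*k)) * X^k, ?_, ?_⟩
  · have hcomp : (∑ k ∈ Finset.range (A.natDegree + 1), C (A.coeff (2*k)) * X^k).comp (X^2)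
        = ∑ k ∈ Finset.range (A.natDegree + 1), C (A.coeff (2*k)) * X^(2*k) := by
      rw [Polynomial.comp, Polynomial.eval₂_finset_sum]
      apply Finset.sum_congr rfl
      intro k _
      rw [eval₂_mul, eval₂_C, eval₂_X_pow, ← pow_mul]
    rw [hcomp]
    ext m
    rw [finset_sum_coeff]
    simp only [coeff_C_mul, coeff_X_pow, mul_ite, mul_one, mul_zero]
    rcases Nat.even_or_odd m with ⟨j, hj⟩ | hodd
    · have hm2 : m = 2*j := by omega
      by_cases hjle : j ∈ Finset.range (A.natDegree+1)
      · rw [Finset.sum_eq_single j]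
        · rw [if_pos (by omega), hm2]
        · intro i _ hne
          rw [if_neg (by omega)]
        · intro hmem
          exact absurd hjle hmem
      · rw [Finset.mem_range] at hjle
        rw [Finset.sum_eq_zero, eq_comm]
        · apply coeff_eq_zero_of_natDegree_lt
          omega
        · intro i hi
          rw [Finset.mem_range] at hi
          rw [if_neg (by omega)]
    · rw [Finset.sum_eq_zero, eq_comm]
      · exact hpar m (Nat.odd_iff.mp hodd)
      · intro i hi
        rw [if_neg (by
          intro h
          rw [h] at hodd
          exact (Nat.not_odd_iff_even.mpr (even_two_mul i)) hodd)]
  · intro k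
    rw [finset_sum_coeff]
    simp only [coeff_C_mul, coeff_X_pow, mul_ite, mul_one, mul_zero]
    by_cases hk : k ∈ Finset.range (A.natDegree+1)
    · right
      rw [Finset.sum_eq_single k]
      · rw [if_pos rfl]
      · intro i _ hne
        rw [if_neg (Ne.symm hne)]
      · intro hmem
        exact absurd hk hmem
    · left
      apply Finset.sum_eq_zero
      intro i hi
      rw [if_neg]
      intro h
      rw [← h] at hi
      exact hk hi

lemma eval_re {p : Polynomial ℂ} {f : Polynomial ℝ} (h : ∀ k, (p.coeff k).re = f.coeff k)
    (x : ℝ) : (p.eval (x:ℂ)).re = f.eval x := by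
  set N := max p.natDegree f.natDegree + 1 with hN
  rw [Polynomial.eval_eq_sum_range' (by omega : p.natDegree < N),
      Polynomial.eval_eq_sum_range' (by omega : f.natDegree < N)]
  rw [Complex.re_sum]
  apply Finset.sum_congr rfl
  intro i _
  rw [show ((x:ℂ)^i) = ((x^i : ℝ) : ℂ) by push_cast; ring]
  simp [Complex.mul_re, h i, ← Complex.ofReal_pow]

end QSPAux
/-- **Real characterization of QSP-achievable pairs** (Theorem A.3). Real
polynomials `p_Re, q_Re` arise as the coefficient-wise real parts of a
QSP-achievable pair `(p, q)` iff `deg q_Re ≤ n - 1`, the pair has parities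
(even, odd) or (odd, even), and `p_Re(x)² + (1 - x²) q_Re(x)² ≤ 1` on `[-1, 1]`. -/
theorem qsp_real_characterization (n : ℕ) (pRe qRe : Polynomial ℝ) (hp : pRe.degree = n) :
    (∃ (p q : Polynomial ℂ) (Φ : ℕ → ℝ),
      (∀ k, (p.coeff k).re = pRe.coeff k) ∧
      (∀ k, (q.coeff k).re = qRe.coeff k) ∧
      (∀ x : ℝ, x ∈ Set.Icc (-1 : ℝ) 1 →
        (QSP n Φ x) 0 0 = p.eval (x : ℂ) ∧
        (QSP n Φ x) 1 0 = q.eval (x : ℂ) * (Real.sqrt (1 - x ^ 2) : ℂ))) ↔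
    (qRe.degree < n ∧
      (((∀ x : ℝ, pRe.eval (-x) = pRe.eval x) ∧ (∀ x : ℝ, qRe.eval (-x) = -qRe.eval x)) ∨
       ((∀ x : ℝ, pRe.eval (-x) = -pRe.eval x) ∧ (∀ x : ℝ, qRe.eval (-x) = qRe.eval x))) ∧
      (∀ x : ℝ, x ∈ Set.Icc (-1 : ℝ) 1 →
        pRe.eval x ^ 2 + (1 - x ^ 2) * qRe.eval x ^ 2 ≤ 1)) := by
  constructor
  · rintro ⟨p, q, Φ, hpre, hqre, hent⟩
    obtain ⟨P, Q, hPd, hQd, hPp, hQp, hent'⟩ := QSPAux.struct n Φ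
    have hpP : p = P := by
      apply Polynomial.eq_of_infinite_eval_eq
      apply Set.infinite_of_injOn_mapsTo
        (Complex.ofReal_injective.injOn : Set.InjOn (fun x : ℝ => (x:ℂ)) (Set.Icc (-1:ℝ) 1))
        ?_ (Set.Icc_infinite (by norm_num : (-1:ℝ) < 1))
      intro x hx
      have h1 := (hent x hx).1
      have h2 := (hent' x hx).1
      simp only [Set.mem_setOf_eq]
      rw [← h1, ← h2]
    have hqQ : q = Q := by
      apply Polynomial.eq_of_infinite_eval_eq
      apply Set.infinite_of_injOn_mapsTo
        (Complex.ofReal_injective.injOn : Set.InjOn (fun x : ℝ => (x:ℂ)) (Set.Ioo (-1:ℝ) 1))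
        ?_ (Set.Ioo_infinite (by norm_num : (-1:ℝ) < 1))
      intro x hx
      have hx' : x ∈ Set.Icc (-1:ℝ) 1 := Set.mem_Icc.mpr ⟨hx.1.le, hx.2.le⟩
      have h1 := (hent x hx').2
      have h2 := (hent' x hx').2
      have hpos : 0 < 1 - x^2 := by nlinarith [hx.1, hx.2]
      have hs : ((Real.sqrt (1-x^2) : ℝ) : ℂ) ≠ 0 := by
        simp only [ne_eq, Complex.ofReal_eq_zero]
        positivity
      simp only [Set.mem_setOf_eq]
      exact mul_right_cancel₀ hs (h1.symm.trans h2)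
    subst hpP
    subst hqQ
    refine ⟨?_, ?_, ?_⟩
    · rw [Polynomial.degree_lt_iff_coeff_zero]
      intro m hm
      rw [← hqre m, hQd m (by exact_mod_cast hm), Complex.zero_re]
    · have hparP : ∀ k, (k + n) % 2 = 1 → pRe.coeff k = 0 := by
        intro k hk
        rw [← hpre k, hPp k hk, Complex.zero_re]
      have hparQ : ∀ k, (k + (n+1)) % 2 = 1 → qRe.coeff k = 0 := by
        intro k hk
        rw [← hqre k, hQp k (by omega), Complex.zero_re]
      rcases Nat.even_or_odd n with he | ho
      · left
        constructor
        · intro x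
          rw [QSPAux.eval_neg_of_parity hparP x, he.neg_one_pow, one_mul]
        · intro x
          rw [QSPAux.eval_neg_of_parity hparQ x,
            (by simpa using he.add_one : Odd (n+1)).neg_one_pow]
          ring
      · right
        constructor
        · intro x
          rw [QSPAux.eval_neg_of_parity hparP x, ho.neg_one_pow]
          ring
        · intro x
          rw [QSPAux.eval_neg_of_parity hparQ x, (by simpa using ho.add_one : Even (n+1)).neg_one_pow,
            one_mul]
    · intro x hx
      obtain ⟨h00, h10⟩ := hent x hx
      have hu := QSPAux.qsp_norm n Φ hx
      rw [h00, h10] at hu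
      set z := p.eval (x:ℂ) with hz
      set w := q.eval (x:ℂ) with hw
      have hc1 : (starRingEnd ℂ) z * z = ((Complex.normSq z : ℝ) : ℂ) := by
        rw [mul_comm, Complex.mul_conj]
      have hc2 : (starRingEnd ℂ) (w * ((Real.sqrt (1-x^2) : ℝ):ℂ)) * (w * ((Real.sqrt (1-x^2) : ℝ):ℂ))
          = ((Complex.normSq w * (Real.sqrt (1-x^2))^2 : ℝ) : ℂ) := by
        rw [mul_comm, Complex.mul_conj, _root_.map_mul, Complex.normSq_ofReal]
        push_cast
        ring
      rw [hc1, hc2, ← Complex.ofReal_add, show (1:ℂ) = ((1:ℝ):ℂ) by norm_num,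
        Complex.ofReal_inj] at hu
      rw [Real.sq_sqrt (QSPAux.sqnn hx)] at hu
      have hre1 : pRe.eval x = z.re := (QSPAux.eval_re hpre x).symm
      have hre2 : qRe.eval x = w.re := (QSPAux.eval_re hqre x).symm
      rw [hre1, hre2]
      have hn1 : Complex.normSq z = z.re^2 + z.im^2 := by
        rw [Complex.normSq_apply]; ring
      have hn2 : Complex.normSq w = w.re^2 + w.im^2 := by
        rw [Complex.normSq_apply]; ring
      rw [hn1, hn2] at hu
      have h1mx : 0 ≤ 1 - x^2 := QSPAux.sqnn hx
      nlinarith [sq_nonneg z.im, sq_nonneg w.im, mul_nonneg h1mx (sq_nonneg w.im)]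
  · rintro ⟨hqdeg, hbranch, hnorm⟩
    have hq0 : ∀ k, n ≤ k → qRe.coeff k = 0 := by
      intro k hk
      apply Polynomial.coeff_eq_zero_of_degree_lt
      exact lt_of_lt_of_le hqdeg (by exact_mod_cast hk)
    have hp0 : ∀ k, n < k → pRe.coeff k = 0 := by
      intro k hk
      apply Polynomial.coeff_eq_zero_of_degree_lt
      rw [hp]
      exact_mod_cast hk
    have hpne : pRe.coeff n ≠ 0 := Polynomial.coeff_ne_zero_of_eq_degree hp
    obtain ⟨hparP, hparQ⟩ : (∀ k, (k + n) % 2 = 1 → pRe.coeff k = 0) ∧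
        (∀ k, (k + n) % 2 = 0 → qRe.coeff k = 0) := by
      rcases hbranch with ⟨hpe, hqo⟩ | ⟨hpo, hqe⟩
      · have hPc : ∀ k, (k + 0) % 2 = 1 → pRe.coeff k = 0 :=
          QSPAux.parity_of_eval_neg (fun x => by rw [hpe x, pow_zero, one_mul])
        have hnev : n % 2 = 0 := by
          by_contra h
          exact hpne (hPc n (by omega))
        have hQc : ∀ k, (k + 1) % 2 = 1 → qRe.coeff k = 0 :=
          QSPAux.parity_of_eval_neg (fun x => by rw [hqo x, pow_one]; ring)
        exact ⟨fun k hk => hPc k (by omega), fun k hk => hQc k (by omega)⟩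
      · have hPc : ∀ k, (k + 1) % 2 = 1 → pRe.coeff k = 0 :=
          QSPAux.parity_of_eval_neg (fun x => by rw [hpo x, pow_one]; ring)
        have hnod : n % 2 = 1 := by
          by_contra h
          exact hpne (hPc n (by omega))
        have hQc : ∀ k, (k + 0) % 2 = 1 → qRe.coeff k = 0 :=
          QSPAux.parity_of_eval_neg (fun x => by rw [hqe x, pow_zero, one_mul])
        exact ⟨fun k hk => hPc k (by omega), fun k hk => hQc k (by omega)⟩
    set A : Polynomial ℝ := 1 - pRe^2 - (1 - X^2) * qRe^2 with hA
    have hApar : ∀ k, k % 2 = 1 → A.coeff k = 0 := by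
      have hev : ∀ x : ℝ, A.eval (-x) = (-1:ℝ)^0 * A.eval x := by
        intro x
        rw [pow_zero, one_mul, hA]
        simp only [eval_sub, eval_one, eval_mul, eval_pow, eval_X]
        rw [QSPAux.eval_neg_of_parity hparP x,
          QSPAux.eval_neg_of_parity (m := n+1) (fun k hk => hparQ k (by omega)) x]
        have e1 : ((-1:ℝ)^n)^2 = 1 := by
          rw [← pow_mul, mul_comm, pow_mul]; norm_num
        have e2 : ((-1:ℝ)^(n+1))^2 = 1 := by
          rw [← pow_mul, mul_comm, pow_mul]; norm_num
        linear_combination (-(pRe.eval x)^2) * e1 + (-(1 - x^2)*(qRe.eval x)^2) * e2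
      have := QSPAux.parity_of_eval_neg (m := 0) hev
      intro k hk
      exact this k (by omega)
    have hAd : ∀ k, 2*n < k → A.coeff k = 0 := by
      intro k hk
      rw [hA, coeff_sub, coeff_sub, coeff_one, if_neg (by omega)]
      have h1 : (pRe^2).coeff k = 0 := by
        rw [sq]
        exact QSPAux.coeff_mul_zero hp0 hp0 k (by omega)
      have hq2 : ∀ j, 2*n ≤ j + 1 → (qRe^2).coeff j = 0 := by
        intro j hj
        rw [sq]
        exact QSPAux.coeff_mul_zero' hq0 hq0 j (by omega)
      have h2 : ((1 - X^2) * qRe^2).coeff k = 0 := by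
        rw [QSPAux.coeff_one_sub_X_sq_mul, hq2 k (by omega)]
        rcases Nat.lt_or_ge k 2 with h2 | h2
        · rw [if_neg (by omega)]; simp
        · rw [if_pos h2, hq2 (k-2) (by omega)]; simp
      rw [h1, h2]
      simp
    obtain ⟨E, hEcomp, hEcoeff⟩ := QSPAux.exists_half A hApar
    have hEdeg : E.natDegree ≤ n := by
      rw [Polynomial.natDegree_le_iff_coeff_eq_zero]
      intro k hk
      rcases hEcoeff k with h | h
      · exact h
      · rw [h]
        exact hAd (2*k) (by omega)
    have hEpos : ∀ y : ℝ, 0 ≤ y → y ≤ 1 → 0 ≤ E.eval y := by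
      intro y hy0 hy1
      have hsmem : Real.sqrt y ∈ Set.Icc (-1:ℝ) 1 :=
        ⟨le_trans (by norm_num) (Real.sqrt_nonneg y), Real.sqrt_le_one.mpr hy1⟩
      have h1 := hnorm (Real.sqrt y) hsmem
      have h2 : A.eval (Real.sqrt y) = E.eval y := by
        rw [← hEcomp, eval_comp, eval_pow, eval_X, Real.sq_sqrt hy0]
      rw [← h2, hA]
      simp only [eval_sub, eval_one, eval_mul, eval_pow, eval_X]
      have h3 := Real.sq_sqrt hy0
      nlinarith [h1, h3]
    have hform := QSPAux.lukacs n E hEdeg hEpos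
    rw [hEcomp] at hform
    obtain ⟨b, c, hbp, hbd, hcp, hcd, hbc⟩ := hform
    have hreal : pRe^2 + b^2 + (1 - X^2) * (qRe^2 + c^2) = 1 := by
      linear_combination hA - hbc
    set Pc := pRe.map (algebraMap ℝ ℂ) + C Complex.I * b.map (algebraMap ℝ ℂ) with hPcdef
    set Qc := qRe.map (algebraMap ℝ ℂ) + C Complex.I * c.map (algebraMap ℝ ℂ) with hQcdef
    have hPcoeff : ∀ k, Pc.coeff k = ((pRe.coeff k : ℝ):ℂ) + Complex.I * ((b.coeff k : ℝ):ℂ) := by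
      intro k
      rw [hPcdef, coeff_add, coeff_C_mul, coeff_map, coeff_map]
      rfl
    have hQcoeff : ∀ k, Qc.coeff k = ((qRe.coeff k : ℝ):ℂ) + Complex.I * ((c.coeff k : ℝ):ℂ) := by
      intro k
      rw [hQcdef, coeff_add, coeff_C_mul, coeff_map, coeff_map]
      rfl
    have hPcd : ∀ k, n < k → Pc.coeff k = 0 := by
      intro k hk
      rw [hPcoeff k, hp0 k hk, hbd k hk]
      simp
    have hQcd : ∀ k, n ≤ k → Qc.coeff k = 0 := by
      intro k hk
      rw [hQcoeff k, hq0 k hk, hcd k hk]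
      simp
    have hPcp : ∀ k, (k + n) % 2 = 1 → Pc.coeff k = 0 := by
      intro k hk
      rw [hPcoeff k, hparP k hk, hbp k hk]
      simp
    have hQcp : ∀ k, (k + n) % 2 = 0 → Qc.coeff k = 0 := by
      intro k hk
      rw [hQcoeff k, hparQ k hk, hcp k hk]
      simp
    have hPstar : Pc.map (starRingEnd ℂ)
        = pRe.map (algebraMap ℝ ℂ) - C Complex.I * b.map (algebraMap ℝ ℂ) := by
      rw [hPcdef]
      simp only [Polynomial.map_add, Polynomial.map_mul, Polynomial.map_C,
        Polynomial.map_map, QSPAux.conj_algebraMap_comm, Complex.conj_I, map_neg, C_neg]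
      ring
    have hQstar : Qc.map (starRingEnd ℂ)
        = qRe.map (algebraMap ℝ ℂ) - C Complex.I * c.map (algebraMap ℝ ℂ) := by
      rw [hQcdef]
      simp only [Polynomial.map_add, Polynomial.map_mul, Polynomial.map_C,
        Polynomial.map_map, QSPAux.conj_algebraMap_comm, Complex.conj_I, map_neg, C_neg]
      ring
    have hI2 : (C Complex.I : Polynomial ℂ)^2 = -1 := by
      rw [← C_pow, Complex.I_sq, map_neg, C_1]
    have hmapped := congrArg (Polynomial.map (algebraMap ℝ ℂ)) hreal
    simp only [Polynomial.map_add, Polynomial.map_mul, Polynomial.map_sub,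
      Polynomial.map_pow, Polynomial.map_one, Polynomial.map_X] at hmapped
    have hU : Pc * Pc.map (starRingEnd ℂ)
        + (1 - X^2) * (Qc * Qc.map (starRingEnd ℂ)) = 1 := by
      rw [hPstar, hQstar, hPcdef, hQcdef]
      linear_combination hmapped
        - ((b.map (algebraMap ℝ ℂ))^2 + (1 - (X:Polynomial ℂ)^2) * (c.map (algebraMap ℝ ℂ))^2) * hI2
    obtain ⟨Φ, hent⟩ := QSPAux.synth n Pc Qc hPcd hQcd hPcp hQcp hU
    refine ⟨Pc, Qc, Φ, ?_, ?_, hent⟩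
    · intro k
      rw [hPcoeff k]
      simp
    · intro k
      rw [hQcoeff k]
      simp
end

section
/- Let r ≥ 1, let c : Fin r → ℝ satisfy 0 ≤ c i ≤ 1 for all i, and set C = diagonal(c), S = diagonal(√(1 − (c i)²)), viewed as r×r complex matrices, and U = fromBlocks C S S (−C), a 2r×2r unitary matrix. Let Π be the 2r×2r projection fromBlocks I 0 0 0 onto the first r coordinates. Let n ≥ 1, Φ = (φ_0, …, φ_n) ∈ ℝ^{n+1}, and p ∈ ℂ[X] with deg p ≤ n such that for all x ∈ [−1, 1] the (0,0) entry of QSP(Φ, x) equals p(x). Then the top-left r×r block of the phased alternating sequence U_Φ (taken with Π_L = Π_R = Π) equals the diagonal matrix with entries p(c i). -/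
open Matrix Complex Polynomial

/-- `E(φ, Π) = e^{iφ}·Π + e^{-iφ}·(I - Π) = e^{iφ(2Π - I)}`. -/
noncomputable def Emat {m : Type*} [Fintype m] [DecidableEq m]
    (φ : ℝ) (P : Matrix m m ℂ) : Matrix m m ℂ :=
  Complex.exp (φ * Complex.I) • P + Complex.exp (-(φ * Complex.I)) • (1 - P)

/-- The phased alternating sequence `U_Φ` associated with a unitary `U`,
projections `Π_L, Π_R` and phases `φ_0, …, φ_n`. -/
noncomputable def phasedAltSeq {m : Type*} [Fintype m] [DecidableEq m]
    (U PL PR : Matrix m m ℂ) (n : ℕ) (Φ : ℕ → ℝ) : Matrix m m ℂ :=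
  if Odd n then
    Emat (Φ 0) PL * U * Emat (Φ 1) PR *
      ((List.range ((n - 1) / 2)).map
        (fun j => Uᴴ * Emat (Φ (2 * j + 2)) PL * U * Emat (Φ (2 * j + 3)) PR)).prod
  else
    Emat (Φ 0) PR *
      ((List.range (n / 2)).map
        (fun j => Uᴴ * Emat (Φ (2 * j + 1)) PL * U * Emat (Φ (2 * j + 2)) PR)).prod

noncomputable def blockify (r : ℕ) :
    ((Fin r → Matrix (Fin 2) (Fin 2) ℂ)) →+* Matrix (Fin r ⊕ Fin r) (Fin r ⊕ Fin r) ℂ where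
  toFun f := Matrix.fromBlocks
    (Matrix.diagonal fun i => f i 0 0) (Matrix.diagonal fun i => f i 0 1)
    (Matrix.diagonal fun i => f i 1 0) (Matrix.diagonal fun i => f i 1 1)
  map_one' := by
    simp only [Pi.one_apply, Matrix.one_apply]
    simp [← Matrix.fromBlocks_one]
  map_mul' f g := by
    rw [Matrix.fromBlocks_multiply]
    simp only [Matrix.diagonal_mul_diagonal, Matrix.diagonal_add, Pi.mul_apply,
      Matrix.mul_apply, Fin.sum_univ_two]
  map_zero' := by simp
  map_add' f g := by
    simp only [Pi.add_apply]
    rw [Matrix.fromBlocks_add]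
    simp [← Matrix.diagonal_add]

lemma hU_eq (r : ℕ) (c : Fin r → ℝ) :
    (Matrix.fromBlocks
          (Matrix.diagonal (fun i => (c i : ℂ)))
          (Matrix.diagonal (fun i => (Real.sqrt (1 - c i ^ 2) : ℂ)))
          (Matrix.diagonal (fun i => (Real.sqrt (1 - c i ^ 2) : ℂ)))
          (-(Matrix.diagonal (fun i => (c i : ℂ))))) =
      blockify r (fun i => Rmat (c i)) := by
  show _ = Matrix.fromBlocks _ _ _ _
  ext i j
  rcases i with i | i <;> rcases j with j | j <;>
    simp [Rmat, Matrix.diagonal_apply]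

lemma hUH_eq (r : ℕ) (c : Fin r → ℝ) :
    (blockify r (fun i => Rmat (c i)))ᴴ = blockify r (fun i => Rmat (c i)) := by
  show (Matrix.fromBlocks _ _ _ _)ᴴ = Matrix.fromBlocks _ _ _ _
  rw [Matrix.fromBlocks_conjTranspose]
  simp [Matrix.diagonal_conjTranspose, Rmat, Pi.star_def, Complex.conj_ofReal]

lemma hE_eq (r : ℕ) (φ : ℝ) :
    Emat φ (Matrix.fromBlocks (1 : Matrix (Fin r) (Fin r) ℂ) 0 0 0) =
      blockify r (fun _ => phaseMat φ) := by
  show _ = Matrix.fromBlocks _ _ _ _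
  ext i j
  rcases i with i | i <;> rcases j with j | j <;>
    simp [Emat, phaseMat, Matrix.fromBlocks, Matrix.one_apply, Matrix.diagonal_apply]

lemma prod_range_two_mul {M : Type*} [Monoid M] (g : ℕ → M) (k : ℕ) :
    ((List.range (2 * k)).map g).prod =
      ((List.range k).map (fun j => g (2 * j) * g (2 * j + 1))).prod := by
  induction k with
  | zero => simp
  | succ k ih =>
    have h2 : 2 * (k + 1) = (2 * k + 1) + 1 := by ring
    rw [h2, List.range_succ, List.range_succ, List.range_succ, List.map_append,
      List.map_append, List.map_append, List.prod_append, List.prod_append,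
      List.prod_append, ih]
    simp [mul_assoc]

lemma qsp_odd (k : ℕ) (Φ : ℕ → ℝ) (x : ℝ) :
    phaseMat (Φ 0) * Rmat x * phaseMat (Φ 1) *
      ((List.range k).map (fun j =>
        Rmat x * phaseMat (Φ (2 * j + 2)) * Rmat x * phaseMat (Φ (2 * j + 3)))).prod =
      QSP (2 * k + 1) Φ x := by
  rw [QSP, List.range_succ_eq_map, List.map_cons, List.prod_cons, List.map_map,
    prod_range_two_mul]
  have : ∀ j : ℕ, ((fun j => Rmat x * phaseMat (Φ (j + 1))) ∘ Nat.succ) (2 * j) *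
      ((fun j => Rmat x * phaseMat (Φ (j + 1))) ∘ Nat.succ) (2 * j + 1) =
      Rmat x * phaseMat (Φ (2 * j + 2)) * Rmat x * phaseMat (Φ (2 * j + 3)) := by
    intro j
    simp only [Function.comp]
    rw [mul_assoc (Rmat x * phaseMat (Φ (2 * j + 2)))]
  simp only [this]
  simp [mul_assoc]

lemma qsp_even (k : ℕ) (Φ : ℕ → ℝ) (x : ℝ) :
    phaseMat (Φ 0) *
      ((List.range k).map (fun j =>
        Rmat x * phaseMat (Φ (2 * j + 1)) * Rmat x * phaseMat (Φ (2 * j + 2)))).prod =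
      QSP (2 * k) Φ x := by
  rw [QSP, prod_range_two_mul]
  congr 1
  congr 1
  apply List.map_congr_left
  intro j _
  rw [mul_assoc (Rmat x * phaseMat (Φ (2 * j + 1)))]

lemma blockify_list_prod (r k : ℕ) (h : ℕ → (Fin r → Matrix (Fin 2) (Fin 2) ℂ)) :
    ((List.range k).map (fun j => blockify r (h j))).prod =
      blockify r (((List.range k).map h).prod) := by
  rw [show (fun j => blockify r (h j)) = (blockify r) ∘ h from rfl, ← List.map_map]
  exact (map_list_prod (blockify r).toMonoidHom _).symm

lemma blockify_toBlocks₁₁ (r : ℕ) (f : Fin r → Matrix (Fin 2) (Fin 2) ℂ) :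
    (blockify r f).toBlocks₁₁ = Matrix.diagonal (fun i => f i 0 0) := by
  show (Matrix.fromBlocks _ _ _ _).toBlocks₁₁ = _
  rw [Matrix.toBlocks_fromBlocks₁₁]

/-- **QSVT on the CS-form unitary** (Lemma 2.10, middle case): the top-left
block of the phased alternating sequence applied to
`fromBlocks C S S (-C)` is `diag(p(c i))`. -/
theorem qsvt_rotation_block (r : ℕ) (hr : 1 ≤ r) (c : Fin r → ℝ)
    (hc : ∀ i, 0 ≤ c i ∧ c i ≤ 1)
    (n : ℕ) (hn : 1 ≤ n) (Φ : ℕ → ℝ) (p : Polynomial ℂ) (hdeg : p.degree ≤ n)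
    (hqsp : ∀ x : ℝ, x ∈ Set.Icc (-1 : ℝ) 1 → (QSP n Φ x) 0 0 = p.eval (x : ℂ)) :
    (phasedAltSeq
        (Matrix.fromBlocks
          (Matrix.diagonal (fun i => (c i : ℂ)))
          (Matrix.diagonal (fun i => (Real.sqrt (1 - c i ^ 2) : ℂ)))
          (Matrix.diagonal (fun i => (Real.sqrt (1 - c i ^ 2) : ℂ)))
          (-(Matrix.diagonal (fun i => (c i : ℂ)))))
        (Matrix.fromBlocks (1 : Matrix (Fin r) (Fin r) ℂ) 0 0 0)
        (Matrix.fromBlocks (1 : Matrix (Fin r) (Fin r) ℂ) 0 0 0)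
        n Φ).toBlocks₁₁ =
      Matrix.diagonal (fun i => p.eval ((c i : ℂ))) := by
  have hx : ∀ i, (c i) ∈ Set.Icc (-1 : ℝ) 1 := fun i => ⟨by linarith [(hc i).1], (hc i).2⟩
  rw [hU_eq, phasedAltSeq]
  simp only [hE_eq, hUH_eq]
  rcases Nat.even_or_odd n with he | ho
  · rw [if_neg (Nat.not_odd_iff_even.mpr he)]
    obtain ⟨k, hk⟩ := he
    have hk2 : n / 2 = k := by omega
    rw [hk2]
    simp only [← _root_.map_mul]
    rw [blockify_list_prod, ← _root_.map_mul, blockify_toBlocks₁₁]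
    apply congrArg Matrix.diagonal
    funext i
    rw [← hqsp (c i) (hx i)]
    show ((_ * ((List.range k).map _).prod : Fin r → Matrix (Fin 2) (Fin 2) ℂ) i) 0 0 = _
    rw [Pi.mul_apply, Pi.list_prod_apply, List.map_map]
    have hn2 : n = 2 * k := by omega
    rw [hn2, ← qsp_even k Φ (c i)]
    rfl
  · rw [if_pos ho]
    obtain ⟨k, hk⟩ := ho
    have hk2 : (n - 1) / 2 = k := by omega
    rw [hk2]
    simp only [← _root_.map_mul]
    rw [blockify_list_prod, ← _root_.map_mul, blockify_toBlocks₁₁]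
    apply congrArg Matrix.diagonal
    funext i
    rw [← hqsp (c i) (hx i)]
    show ((_ * ((List.range k).map _).prod : Fin r → Matrix (Fin 2) (Fin 2) ℂ) i) 0 0 = _
    rw [Pi.mul_apply, Pi.list_prod_apply, List.map_map]
    have hn2 : n = 2 * k + 1 := by omega
    rw [hn2, ← qsp_odd k Φ (c i)]
    rfl
end

section
/- Let U be a d×d unitary matrix over ℂ, let B_L be a d×r and B_R a d×c complex matrix with orthonormal columns (B_Lᴴ B_L = I_r and B_Rᴴ B_R = I_c), and set Π_L = B_L B_Lᴴ, Π_R = B_R B_Rᴴ, and M = Π_L U Π_R. Let n be odd, Φ = (φ_0, …, φ_n) ∈ ℝ^{n+1}, and let p ∈ ℂ[X] be an odd polynomial with deg p ≤ n, writing p(X) = X·g(X²) for some g ∈ ℂ[X], such that for all x ∈ [−1, 1] the (0,0) entry of QSP(Φ, x) equals p(x). Then Π_L · U_Φ · Π_R = M · g(Mᴴ M), where g is applied to the d×d matrix Mᴴ M via polynomial evaluation. -/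
open Matrix Complex Polynomial

/-- The phased alternating sequence `U_Φ` for odd `n`:
`E(φ₀, Π_L)·U·E(φ₁, Π_R)·∏_{j=1}^{(n-1)/2} [Uᴴ·E(φ_{2j}, Π_L)·U·E(φ_{2j+1}, Π_R)]`. -/
noncomputable def phasedAltSeqOdd {m : Type*} [Fintype m] [DecidableEq m]
    (U PL PR : Matrix m m ℂ) (n : ℕ) (Φ : ℕ → ℝ) : Matrix m m ℂ :=
  Emat (Φ 0) PL * U * Emat (Φ 1) PR *
    ((List.range ((n - 1) / 2)).map
      (fun j => Uᴴ * Emat (Φ (2 * j + 2)) PL * U * Emat (Φ (2 * j + 3)) PR)).prod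

-- scaffolding

/-- universal state recursion -/
noncomputable def qsvtState (Φ : ℕ → ℝ) : ℕ → ℂ × Polynomial ℂ × Polynomial ℂ
  | 0 => (Complex.exp (Φ 0 * Complex.I) * Complex.exp (-(Φ 1 * Complex.I)),
          C (Complex.exp (Φ 0 * Complex.I) *
            (Complex.exp (Φ 1 * Complex.I) - Complex.exp (-(Φ 1 * Complex.I)))), 0)
  | (k+1) =>
      let α := (qsvtState Φ k).1
      let b := (qsvtState Φ k).2.1
      let c := (qsvtState Φ k).2.2
      let e := Complex.exp (-(Φ (2*k+2) * Complex.I))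
      let s := Complex.exp (Φ (2*k+2) * Complex.I) - e
      let f := Complex.exp (-(Φ (2*k+3) * Complex.I))
      let t := Complex.exp (Φ (2*k+3) * Complex.I) - f
      (f * ((e+s)*α),
       f • (e • b) + t • (C ((e+s)*α) + e • b + X * (e • c + s • (b+c))),
       f • (e • c + s • (b+c)))

set_option linter.unusedSectionVars false

lemma Emat_eq {m : Type*} [Fintype m] [DecidableEq m] (φ : ℝ) (P : Matrix m m ℂ) :
    Emat φ P = Complex.exp (-(φ*Complex.I)) • (1 : Matrix m m ℂ)
      + (Complex.exp (φ*Complex.I) - Complex.exp (-(φ*Complex.I))) • P := by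
  simp [Emat, smul_sub, sub_smul]; abel

section Abstract
variable {m : Type*} [Fintype m] [DecidableEq m]
variable (A V W Q : Matrix m m ℂ)

noncomputable def formMat (α : ℂ) (b c : Polynomial ℂ) : Matrix m m ℂ :=
  α • A + A * (aeval W b) * Q + A * (aeval W c) * (Q * V)

variable {A V W Q}
variable (hQ : Q*Q = Q) (hAV : A*V = A) (hVV : V*V = V) (hQVQ : Q*V*Q = W)

include hQ hQVQ in
lemma hWQ : W * Q = W := by
  rw [← hQVQ, mul_assoc (Q*V) Q Q, hQ]

lemma commW (q : Polynomial ℂ) : W * aeval W q = aeval W q * W := by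
  have h1 : aeval W (X * q) = W * aeval W q := by rw [_root_.map_mul, aeval_X]
  have h2 : aeval W (q * X) = aeval W q * W := by rw [_root_.map_mul, aeval_X]
  rw [← h1, ← h2, mul_comm]

include hQ hQVQ in
lemma aevalXQ (q : Polynomial ℂ) : aeval W (X * q) * Q = aeval W (X * q) := by
  rw [_root_.map_mul, aeval_X, commW, mul_assoc, hWQ hQ hQVQ]

include hAV hVV in
lemma formV (α : ℂ) (b c : Polynomial ℂ) (e s : ℂ) :
    formMat A V W Q α b c * (e • 1 + s • V)
      = formMat A V W Q ((e+s)*α) (e • b) (e • c + s • (b + c)) := by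
  have hTV : formMat A V W Q α b c * V
      = α • A + A * (aeval W b) * (Q*V) + A * (aeval W c) * (Q*V) := by
    rw [formMat, add_mul, add_mul, smul_mul_assoc, hAV,
      mul_assoc (A * (aeval W b)) Q V,
      mul_assoc (A * (aeval W c)) (Q*V) V, mul_assoc Q V V, hVV]
  rw [mul_add, mul_smul_comm, mul_one, mul_smul_comm, hTV, formMat, formMat]
  simp only [_root_.map_smul, map_add, smul_add, smul_smul, add_smul, mul_add, add_mul,
    smul_mul_assoc, mul_smul_comm]
  abel

include hQ hQVQ in
lemma formMatQ (α : ℂ) (b c : Polynomial ℂ) :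
    formMat A V W Q α b c * Q = A * (aeval W (C α + b + X * c)) * Q := by
  rw [formMat, add_mul, add_mul, smul_mul_assoc,
    mul_assoc (A * (aeval W b)) Q Q, hQ,
    mul_assoc (A * (aeval W c)) (Q*V) Q, hQVQ]
  have h2 : A * (aeval W (X * c)) * Q = A * (aeval W c) * W := by
    rw [mul_assoc, aevalXQ hQ hQVQ, _root_.map_mul, aeval_X, commW, ← mul_assoc]
  have h3 : α • (A * Q) = A * (aeval W (C α)) * Q := by
    rw [aeval_C, Algebra.algebraMap_eq_smul_one, mul_smul_comm, mul_one, smul_mul_assoc]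
  rw [← h2, h3]
  simp only [map_add, mul_add, add_mul]

include hQ hQVQ in
lemma hMWQ (n : ℕ) : (A*Q)*W^n*Q = (A*Q)*W^n := by
  induction n with
  | zero => rw [pow_zero, mul_one, mul_assoc, hQ]
  | succ n ih => rw [pow_succ, ← mul_assoc, mul_assoc ((A*Q)*W^n) W Q, hWQ hQ hQVQ]

include hQ hQVQ in
lemma hAWQ (n : ℕ) : A*W^n*Q = (A*Q)*W^n := by
  induction n with
  | zero => rw [pow_zero, mul_one, mul_one]
  | succ n ih =>
    have h1 : A*W^(n+1)*Q = (A*W^n*Q)*(V*Q) := by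
      rw [pow_succ, ← mul_assoc, mul_assoc (A*W^n) W Q, hWQ hQ hQVQ, ← hQVQ]
      simp only [Matrix.mul_assoc]
    have h2 : (A*Q)*W^(n+1) = ((A*Q)*W^n*Q)*(V*Q) := by
      rw [pow_succ, ← hQVQ]
      simp only [Matrix.mul_assoc]
    rw [h1, h2, ih, hMWQ hQ hQVQ n]

include hQ hQVQ in
lemma aevalForm (q : Polynomial ℂ) : A * aeval W q * Q = (A*Q) * aeval W q := by
  induction q using Polynomial.induction_on' with
  | add p r hp hr => simp only [map_add, mul_add, add_mul, hp, hr]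
  | monomial n a =>
    rw [aeval_monomial, Algebra.algebraMap_eq_smul_one, smul_mul_assoc, one_mul,
      mul_smul_comm, smul_mul_assoc, mul_smul_comm, hAWQ hQ hQVQ n]

include hQ hQVQ in
lemma formQ (α : ℂ) (b c : Polynomial ℂ) (f t : ℂ) :
    formMat A V W Q α b c * (f • 1 + t • Q)
      = formMat A V W Q (f*α) (f • b + t • (C α + b + X * c)) (f • c) := by
  have hTQ := formMatQ hQ hQVQ (A := A) α b c
  rw [mul_add, mul_smul_comm, mul_one, mul_smul_comm, hTQ, formMat, formMat]
  simp only [_root_.map_smul, map_add, smul_add, smul_smul, add_smul, mul_add, add_mul,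
    smul_mul_assoc, mul_smul_comm]
  abel

end Abstract

section Main
variable {m : Type*} [Fintype m] [DecidableEq m]
variable (U P Q : Matrix m m ℂ) (Φ : ℕ → ℝ)

noncomputable def altProd (k : ℕ) : Matrix m m ℂ :=
  Emat (Φ 0) P * U * Emat (Φ 1) Q *
    ((List.range k).map
      (fun j => Uᴴ * Emat (Φ (2 * j + 2)) P * U * Emat (Φ (2 * j + 3)) Q)).prod

variable {U P Q}
variable (hP : P*P = P) (hQ : Q*Q = Q) (hU1 : Uᴴ*U = 1) (hU2 : U*Uᴴ = 1)

include hP hU2 in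
lemma hAV' : (P*U)*(Uᴴ*P*U) = P*U := by
  rw [show (P*U) * (Uᴴ*P*U) = P*(U*Uᴴ)*(P*U) by simp [Matrix.mul_assoc], hU2]
  rw [Matrix.mul_one, ← Matrix.mul_assoc, hP]

include hP hU2 in
lemma hVV' : (Uᴴ*P*U)*(Uᴴ*P*U) = Uᴴ*P*U := by
  rw [show (Uᴴ*P*U) * (Uᴴ*P*U) = Uᴴ*(P*(U*Uᴴ)*P)*U by simp [Matrix.mul_assoc], hU2]
  simp [Matrix.mul_assoc, hP]

include hP in
lemma hPE (φ : ℝ) : P * Emat φ P = Complex.exp (φ * Complex.I) • P := by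
  rw [Emat_eq, mul_add, mul_smul_comm, mul_one, mul_smul_comm, hP, ← add_smul]
  ring_nf

include hU1 in
lemma hblock (φ : ℝ) : Uᴴ * Emat φ P * U
    = Complex.exp (-(φ * Complex.I)) • (1 : Matrix m m ℂ)
      + (Complex.exp (φ * Complex.I) - Complex.exp (-(φ * Complex.I))) • (Uᴴ*P*U) := by
  rw [Emat_eq, mul_add, add_mul, mul_smul_comm, smul_mul_assoc, mul_one,
    mul_smul_comm, smul_mul_assoc, hU1]

include hP hQ hU1 hU2 in
lemma structural (k : ℕ) :
    P * altProd U P Q Φ k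
      = formMat (P*U) (Uᴴ*P*U) (Q*(Uᴴ*P*U)*Q) Q (qsvtState Φ k).1
          (qsvtState Φ k).2.1 (qsvtState Φ k).2.2 := by
  induction k with
  | zero =>
    rw [altProd, List.range_zero, List.map_nil, List.prod_nil, mul_one,
      ← Matrix.mul_assoc, ← Matrix.mul_assoc, hPE hP, Emat_eq]
    simp only [qsvtState, formMat, map_zero, Matrix.zero_mul, Matrix.mul_zero,
      add_zero, aeval_C, Algebra.algebraMap_eq_smul_one, smul_mul_assoc,
      mul_smul_comm, mul_add, mul_one, smul_smul, smul_add]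
    ring_nf
  | succ k ih =>
    have hsplit : altProd U P Q Φ (k+1)
        = altProd U P Q Φ k *
          ((Uᴴ * Emat (Φ (2*k+2)) P * U) *
            (Emat (Φ (2*k+3)) Q)) := by
      rw [altProd, altProd, List.range_succ, List.map_append, List.prod_append,
        List.map_singleton, List.prod_singleton]
      simp only [Matrix.mul_assoc]
    rw [hsplit, ← Matrix.mul_assoc, ih, hblock hU1, Emat_eq, ← mul_assoc,
      formV (hAV' hP hU2) (hVV' hP hU2), formQ hQ rfl]
    simp only [qsvtState]
include hP hQ hU1 hU2 in
lemma sandwich (k : ℕ) :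
    P * altProd U P Q Φ k * Q
      = (P*U*Q) * aeval (Q*(Uᴴ*P*U)*Q)
          (C (qsvtState Φ k).1 + (qsvtState Φ k).2.1 + X * (qsvtState Φ k).2.2) := by
  rw [structural Φ hP hQ hU1 hU2 k, formMatQ hQ rfl, aevalForm hQ rfl]

include hP in
lemma WisMM (hPH : Pᴴ = P) (hQH : Qᴴ = Q) :
    (P*U*Q)ᴴ*(P*U*Q) = Q*(Uᴴ*P*U)*Q := by
  rw [conjTranspose_mul, conjTranspose_mul, hPH, hQH]
  have h1 : Q * (Uᴴ * P) * (P*U*Q) = Q*Uᴴ*(P*P)*(U*Q) := by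
    simp only [Matrix.mul_assoc]
  rw [h1, hP]; simp only [Matrix.mul_assoc]

end Main

section QSPside

def projMat : Matrix (Fin 2) (Fin 2) ℂ := !![1,0;0,0]

lemma proj_mul_proj : projMat * projMat = projMat := by
  ext i j; fin_cases i <;> fin_cases j <;>
    simp [projMat, Matrix.mul_apply, Fin.sum_univ_two]

lemma proj_herm : projMatᴴ = projMat := by
  ext i j; fin_cases i <;> fin_cases j <;>
    simp [projMat, Matrix.conjTranspose_apply]

lemma Emat_proj (φ : ℝ) : Emat φ projMat = phaseMat φ := by
  ext i j; fin_cases i <;> fin_cases j <;>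
    simp [Emat, phaseMat, projMat, Matrix.one_apply]

lemma Rmat_herm (x : ℝ) : (Rmat x)ᴴ = Rmat x := by
  ext i j; fin_cases i <;> fin_cases j <;>
    simp [Rmat, Matrix.conjTranspose_apply]

lemma Rmat_sq (x : ℝ) (hx : (0:ℝ) ≤ 1 - x^2) : Rmat x * Rmat x = 1 := by
  have hs : (Real.sqrt (1-x^2) : ℂ) * (Real.sqrt (1-x^2) : ℂ) = 1 - (x:ℂ)*(x:ℂ) := by
    rw [← Complex.ofReal_mul, Real.mul_self_sqrt hx]; push_cast; ring
  ext i j; fin_cases i <;> fin_cases j <;>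
    simp [Rmat, Matrix.mul_apply, Fin.sum_univ_two, Matrix.one_apply, hs] <;> ring

lemma list_pair_prod {M : Type*} [Monoid M] (f : ℕ → M) (K : ℕ) :
    ((List.range (2*K+1)).map f).prod
      = f 0 * ((List.range K).map (fun j => f (2*j+1) * f (2*j+2))).prod := by
  induction K with
  | zero => rw [show 2*0+1 = 1 from rfl, List.range_succ]; simp
  | succ K ih =>
    have h : 2*(K+1)+1 = (2*K+1)+1+1 := by ring
    rw [h, List.range_succ, List.range_succ, List.map_append, List.prod_append,
      List.map_append, List.prod_append, List.map_singleton, List.prod_singleton,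
      List.map_singleton, List.prod_singleton, ih, List.range_succ, List.map_append,
      List.prod_append, List.map_singleton, List.prod_singleton]
    simp only [mul_assoc]

lemma QSP_eq_altProd (Φ : ℕ → ℝ) (x : ℝ) (K : ℕ) :
    QSP (2*K+1) Φ x = altProd (Rmat x) projMat projMat Φ K := by
  rw [QSP, list_pair_prod, altProd]
  simp only [Rmat_herm, Emat_proj, Matrix.mul_assoc]

lemma proj_sandwich_entry (A : Matrix (Fin 2) (Fin 2) ℂ) :
    (projMat * A * projMat) 0 0 = A 0 0 := by
  rw [Matrix.mul_apply, Fin.sum_univ_two, Matrix.mul_apply, Fin.sum_univ_two]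
  simp [projMat]

lemma aeval_smul_idem {A : Type*} [Ring A] [Algebra ℂ A] (E : A) (hE : E*E = E)
    (s : ℂ) (q : Polynomial ℂ) :
    aeval (s • E) q = (q.eval s - q.coeff 0) • E + (q.coeff 0) • (1:A) := by
  have hpow : ∀ n:ℕ, E^(n+1) = E := by
    intro n; induction n with
    | zero => rw [pow_one]
    | succ n ih => rw [pow_succ, ih, hE]
  induction q using Polynomial.induction_on' with
  | add p r hp hr =>
    rw [map_add, hp, hr]
    simp only [eval_add, coeff_add]
    module
  | monomial n a =>
    rw [aeval_monomial, Algebra.algebraMap_eq_smul_one, _root_.smul_pow]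
    cases n with
    | zero => simp
    | succ n =>
      rw [hpow n]
      simp [coeff_monomial, smul_smul, eval_monomial, smul_mul_assoc, mul_smul_comm,
        mul_comm]

end QSPside

section Entry

lemma proj_M (x : ℝ) : projMat * Rmat x * projMat = (x:ℂ) • projMat := by
  ext i j; fin_cases i <;> fin_cases j <;>
    simp [projMat, Rmat, Matrix.mul_apply, Fin.sum_univ_two]

lemma proj_W (x : ℝ) :
    projMat * ((Rmat x)ᴴ * projMat * Rmat x) * projMat = ((x:ℂ)^2) • projMat := by
  rw [Rmat_herm]
  ext i j; fin_cases i <;> fin_cases j <;>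
    simp [projMat, Rmat, Matrix.mul_apply, Fin.sum_univ_two] <;> ring

lemma QSP_entry (Φ : ℕ → ℝ) (K : ℕ) (x : ℝ) (hx : x ∈ Set.Icc (-1:ℝ) 1) :
    (QSP (2*K+1) Φ x) 0 0
      = (x:ℂ) * (C (qsvtState Φ K).1 + (qsvtState Φ K).2.1
          + X * (qsvtState Φ K).2.2).eval ((x:ℂ)^2) := by
  obtain ⟨h1, h2⟩ := hx
  have h1mx : (0:ℝ) ≤ 1 - x^2 := by nlinarith
  have hRH := Rmat_herm x
  have hR2 := Rmat_sq x h1mx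
  have hU1 : (Rmat x)ᴴ * Rmat x = 1 := by rw [hRH]; exact hR2
  have hU2 : Rmat x * (Rmat x)ᴴ = 1 := by rw [hRH]; exact hR2
  have hs := sandwich Φ proj_mul_proj proj_mul_proj hU1 hU2 K
  rw [← proj_sandwich_entry (QSP (2*K+1) Φ x), QSP_eq_altProd, hs, proj_M, proj_W,
    aeval_smul_idem _ proj_mul_proj]
  simp only [mul_add, smul_mul_assoc, mul_smul_comm, smul_smul, proj_mul_proj,
    Matrix.mul_one, Matrix.add_apply, Matrix.smul_apply, smul_eq_mul]
  rw [show projMat 0 0 = 1 by simp [projMat]]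
  ring

end Entry


/-- **QSVT, odd case** (Theorem 2.9): for an odd QSP-achievable polynomial
`p(X) = X·g(X²)`, the phased alternating sequence block-encodes
`p⁽ˢᵛ⁾(M) = M·g(Mᴴ M)` where `M = Π_L U Π_R`. -/
theorem qsvt_odd (d r c : ℕ) (U : Matrix (Fin d) (Fin d) ℂ)
    (hU1 : Uᴴ * U = 1) (hU2 : U * Uᴴ = 1)
    (BL : Matrix (Fin d) (Fin r) ℂ) (BR : Matrix (Fin d) (Fin c) ℂ)
    (hBL : BLᴴ * BL = 1) (hBR : BRᴴ * BR = 1)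
    (n : ℕ) (hn : Odd n) (Φ : ℕ → ℝ)
    (p g : Polynomial ℂ) (hdeg : p.degree ≤ n)
    (hpg : p = Polynomial.X * g.comp (Polynomial.X ^ 2))
    (hqsp : ∀ x : ℝ, x ∈ Set.Icc (-1 : ℝ) 1 → (QSP n Φ x) 0 0 = p.eval (x : ℂ)) :
    (BL * BLᴴ) * phasedAltSeqOdd U (BL * BLᴴ) (BR * BRᴴ) n Φ * (BR * BRᴴ) =
      ((BL * BLᴴ) * U * (BR * BRᴴ)) *
        Polynomial.aeval
          (((BL * BLᴴ) * U * (BR * BRᴴ))ᴴ * ((BL * BLᴴ) * U * (BR * BRᴴ))) g := by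
  obtain ⟨K, hK⟩ := hn
  have hK' : n = 2*K+1 := by omega
  subst hK'
  have hP : (BL*BLᴴ)*(BL*BLᴴ) = BL*BLᴴ := by
    rw [show BL*BLᴴ*(BL*BLᴴ) = BL*(BLᴴ*BL)*BLᴴ by simp only [Matrix.mul_assoc], hBL,
      Matrix.mul_one]
  have hQ : (BR*BRᴴ)*(BR*BRᴴ) = BR*BRᴴ := by
    rw [show BR*BRᴴ*(BR*BRᴴ) = BR*(BRᴴ*BR)*BRᴴ by simp only [Matrix.mul_assoc], hBR,
      Matrix.mul_one]
  have hPH : (BL*BLᴴ)ᴴ = BL*BLᴴ := by simp [Matrix.conjTranspose_mul]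
  have hQH : (BR*BRᴴ)ᴴ = BR*BRᴴ := by simp [Matrix.conjTranspose_mul]
  have halt : phasedAltSeqOdd U (BL*BLᴴ) (BR*BRᴴ) (2*K+1) Φ
      = altProd U (BL*BLᴴ) (BR*BRᴴ) Φ K := by
    rw [phasedAltSeqOdd, altProd, show (2*K+1-1)/2 = K by omega]
  -- identify the universal polynomial with g
  have hroot : ∀ x : ℝ, x ∈ Set.Ioc (0:ℝ) 1 →
      (C (qsvtState Φ K).1 + (qsvtState Φ K).2.1
        + X * (qsvtState Φ K).2.2).eval ((x:ℂ)^2) = g.eval ((x:ℂ)^2) := by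
    intro x hx
    have hx' : x ∈ Set.Icc (-1:ℝ) 1 := ⟨by linarith [hx.1], hx.2⟩
    have h1 := QSP_entry Φ K x hx'
    have h2 := hqsp x hx'
    have hp : p.eval (x:ℂ) = (x:ℂ) * g.eval ((x:ℂ)^2) := by
      rw [hpg, eval_mul, eval_X, eval_comp, eval_pow, eval_X]
    have hxne : (x:ℂ) ≠ 0 := by
      exact_mod_cast ne_of_gt hx.1
    apply mul_left_cancel₀ hxne
    rw [← h1, h2, hp]
  have hβg : C (qsvtState Φ K).1 + (qsvtState Φ K).2.1 + X * (qsvtState Φ K).2.2 = g := by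
    set β := C (qsvtState Φ K).1 + (qsvtState Φ K).2.1 + X * (qsvtState Φ K).2.2 with hβ
    have hsub : Set.InjOn (fun x:ℝ => ((x:ℂ)^2)) (Set.Ioc 0 1) := by
      intro a ha b hb hab
      have hab' : (a:ℝ)^2 = (b:ℝ)^2 := by
        have : ((a^2 : ℝ) : ℂ) = ((b^2 : ℝ) : ℂ) := by push_cast; exact hab
        exact_mod_cast this
      nlinarith [ha.1, hb.1]
    have hinf : {z : ℂ | (β - g).IsRoot z}.Infinite := by
      refine Set.Infinite.mono ?_
        ((Set.infinite_coe_iff.mp (Set.Ioc.infinite (by norm_num : (0:ℝ) < 1))).image hsub)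
      rintro z ⟨x, hx, rfl⟩
      simp only [Set.mem_setOf_eq, IsRoot, eval_sub, hroot x hx, sub_self]
    have h0 := Polynomial.eq_zero_of_infinite_isRoot _ hinf
    have := sub_eq_zero.mp h0
    exact this
  rw [halt, sandwich Φ hP hQ hU1 hU2 K, hβg,
    WisMM hP hPH hQH]
end
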